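/- arXiv:2311.05094 — 8 statements merged into one kernel-verified Lean document; each statement's English description precedes it below -/
import Mathlib

section
/- Let I = (D, K) be a tree instance and let W ⊆ N be any set of nodes. Then for any two commodities k, j ∈ K, the cut sets satisfy δ⁺_{P_k}(W) ∩ δ⁺_{P_j}(W) = ∅ if and only if δ⁺_{cl(P_k)}(W) ∩ δ⁺_{cl(P_j)}(W) = ∅. -/
open scoped Classical

variable {V : Type*}

/-- The arcs traversed by a list of vertices. -/
def listArcs (p : List V) : Set (V × V) := {a | a ∈ p.zip p.tail}

/-- `p` is a directed walk from `s` to `t` using only arcs in `E`. -/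
def IsDiwalk (E : Set (V × V)) (p : List V) (s t : V) : Prop :=
  p ≠ [] ∧ p.head? = some s ∧ p.getLast? = some t ∧
    p.Chain' (fun u w => (u, w) ∈ E)

/-- `p` is a directed path from `s` to `t` using only arcs in `E`. -/
def IsDipath (E : Set (V × V)) (p : List V) (s t : V) : Prop :=
  IsDiwalk E p s t ∧ p.Nodup

/-- Transitive closure of an arc set: an arc `(i, j)` whenever `i ≠ j` and there is
a directed path from `i` to `j`. -/
def cl (E : Set (V × V)) : Set (V × V) :=
  {a | a.1 ≠ a.2 ∧ Relation.ReflTransGen (fun u w => (u, w) ∈ E) a.1 a.2}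

/-- The arcs of `E` leaving node set `U`: `δ⁺_E(U)`. -/
def cut (E : Set (V × V)) (U : Set V) : Set (V × V) :=
  {a ∈ E | a.1 ∈ U ∧ a.2 ∉ U}

/-- The underlying undirected simple graph of an arc set. -/
def undirected (E : Set (V × V)) : SimpleGraph V where
  Adj u w := u ≠ w ∧ ((u, w) ∈ E ∨ (w, u) ∈ E)
  symm := ⟨fun u w h => ⟨h.1.symm, h.2.symm⟩⟩
  loopless := ⟨fun u h => h.1 rfl⟩

/-- `H` is a feasible subgraph of `cl A`: for every commodity `k ∈ K` there is a
directed `s_k,t_k`-path in `H` using only arcs of `cl (P k)`. -/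
def Feasible (A : Set (V × V)) (K : Finset (V × V)) (P : V × V → List V)
    (H : Set (V × V)) : Prop :=
  H ⊆ cl A ∧ ∀ k ∈ K, ∃ p : List V,
    IsDipath (H ∩ cl (listArcs (P k))) p k.1 k.2

/-- Out-degree of `v` in arc set `H`. -/
noncomputable def outDeg (H : Set (V × V)) (v : V) : ℕ := {w | (v, w) ∈ H}.ncard

/-- Maximum out-degree `Δ⁺(H)`. -/
noncomputable def maxOutDeg [Fintype V] (H : Set (V × V)) : ℕ :=
  Finset.univ.sup fun v => outDeg H v

/-- `Δ*`: the minimum of `Δ⁺(H)` over all feasible subgraphs `H` of `cl A`. -/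
noncomputable def DeltaStar [Fintype V] (A : Set (V × V)) (K : Finset (V × V))
    (P : V × V → List V) : ℕ :=
  sInf {d | ∃ H, Feasible A K P H ∧ maxOutDeg H = d}

/-- The set `S(K')` of sources of a commodity set. -/
def srcs [DecidableEq V] (K' : Finset (V × V)) : Finset V := K'.image Prod.fst

/-- A tree instance: a finite nonempty commodity set of nontrivial commodities,
the underlying undirected graph of `A` is a tree, and `P k` is the (unique)
directed `s_k,t_k`-path in `A` for each commodity `k`. -/
def IsTreeInstance (A : Set (V × V)) (K : Finset (V × V))
    (P : V × V → List V) : Prop :=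
  K.Nonempty ∧ (∀ k ∈ K, k.1 ≠ k.2) ∧ (undirected A).IsTree ∧
    ∀ k ∈ K, IsDipath A (P k) k.1 k.2

/- ### Auxiliary lemmas -/

lemma listArcs_cons_cons (x y : V) (t : List V) :
    listArcs (x :: y :: t) = insert (x, y) (listArcs (y :: t)) := by
  ext a
  simp [listArcs, List.zip_cons_cons, or_comm, eq_comm]

lemma listArcs_subset_cons (x : V) (l : List V) :
    listArcs l ⊆ listArcs (x :: l) := by
  cases l with
  | nil => simp [listArcs]
  | cons y t =>
    rw [listArcs_cons_cons]
    exact Set.subset_insert _ _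

lemma arcs_index : ∀ {p : List V} {a b : V}, (a, b) ∈ listArcs p →
    ∃ i, p[i]? = some a ∧ p[i + 1]? = some b
  | [], a, b, h => by simp [listArcs] at h
  | [x], a, b, h => by simp [listArcs] at h
  | x :: y :: t, a, b, h => by
    rw [listArcs_cons_cons] at h
    rcases h with h | h
    · obtain ⟨rfl, rfl⟩ := Prod.mk.injEq .. ▸ h
      exact ⟨0, by simp⟩
    · obtain ⟨i, h1, h2⟩ := arcs_index h
      exact ⟨i + 1, by simpa using h1, by simpa using h2⟩

lemma pair_infix_of_arcs : ∀ {p : List V} {a b : V}, (a, b) ∈ listArcs p →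
    [a, b] <:+: p
  | [], a, b, h => by simp [listArcs] at h
  | [x], a, b, h => by simp [listArcs] at h
  | x :: y :: t, a, b, h => by
    rw [listArcs_cons_cons] at h
    rcases h with h | h
    · obtain ⟨rfl, rfl⟩ := Prod.mk.injEq .. ▸ h
      exact ⟨[], t, rfl⟩
    · exact (pair_infix_of_arcs h).trans ((List.suffix_cons x (y :: t)).isInfix)

lemma arcs_of_pair_infix : ∀ {p : List V} {a b : V}, [a, b] <:+: p →
    (a, b) ∈ listArcs p := by
  intro p a b ⟨s, t, hst⟩
  subst hst
  induction s with
  | nil =>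
    rw [List.nil_append, List.cons_append, List.cons_append, listArcs_cons_cons]
    exact Set.mem_insert _ _
  | cons x s ih =>
    exact listArcs_subset_cons x _ ih

lemma listArcs_mono_infix {q p : List V} (h : q <:+: p) :
    listArcs q ⊆ listArcs p := by
  intro a ha
  have := pair_infix_of_arcs (p := q) (a := a.1) (b := a.2) (by simpa using ha)
  exact arcs_of_pair_infix (this.trans h)

lemma crossing (W : Set V) : ∀ {q : List V} {u w : V},
    q.head? = some u → q.getLast? = some w → u ∈ W → w ∉ W →
    ∃ a b, (a, b) ∈ listArcs q ∧ a ∈ W ∧ b ∉ W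
  | [], u, w, hh, _, _, _ => by simp at hh
  | [x], u, w, hh, hl, huW, hwW => by
    have h1 : x = u := by simpa using hh
    have h2 : x = w := by simpa using hl
    rw [← h1] at huW; rw [← h2] at hwW
    exact absurd huW hwW
  | x :: y :: t, u, w, hh, hl, huW, hwW => by
    simp only [List.head?_cons, Option.some.injEq] at hh
    subst hh
    rw [List.getLast?_cons_cons] at hl
    by_cases hy : y ∈ W
    · obtain ⟨a, b, harc, haW, hbW⟩ := crossing W (q := y :: t) rfl hl hy hwW
      refine ⟨a, b, listArcs_subset_cons _ _ harc, haW, hbW⟩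
    · refine ⟨x, y, ?_, huW, hy⟩
      rw [listArcs_cons_cons]
      exact Set.mem_insert _ _

lemma reach_index {p : List V} (hnd : p.Nodup) {u w : V}
    (h : Relation.ReflTransGen (fun a b => (a, b) ∈ listArcs p) u w) :
    u = w ∨ ∃ i jn : ℕ, i < jn ∧ p[i]? = some u ∧ p[jn]? = some w := by
  induction h with
  | refl => exact Or.inl rfl
  | @tail b c hub harc ih =>
    obtain ⟨i', h1, h2⟩ := arcs_index harc
    rcases ih with rfl | ⟨i, jn, hij, hiu, hjb⟩
    · exact Or.inr ⟨i', i' + 1, Nat.lt_succ_self _, h1, h2⟩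
    · obtain ⟨hjl, hje⟩ := List.getElem?_eq_some_iff.1 hjb
      obtain ⟨hil, hie⟩ := List.getElem?_eq_some_iff.1 h1
      have : jn = i' := (hnd.getElem_inj_iff).1 (hje.trans hie.symm)
      exact Or.inr ⟨i, i' + 1, by omega, hiu, h2⟩

lemma segAux {p : List V} {u w : V} {i jn : ℕ}
    (hij : i < jn) (hiu : p[i]? = some u) (hjw : p[jn]? = some w) :
    ∃ q : List V, q <:+: p ∧ q.head? = some u ∧ q.getLast? = some w := by
  obtain ⟨hjl, -⟩ := List.getElem?_eq_some_iff.1 hjw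
  refine ⟨(p.drop i).take (jn - i + 1), ?_, ?_, ?_⟩
  · exact (List.take_prefix _ _).isInfix.trans (List.drop_suffix i p).isInfix
  · rw [List.head?_eq_getElem?, List.getElem?_take, if_pos (by omega),
      List.getElem?_drop]
    simpa using hiu
  · have hlen : ((p.drop i).take (jn - i + 1)).length = jn - i + 1 := by
      rw [List.length_take, List.length_drop]
      omega
    rw [List.getLast?_eq_getElem?, hlen]
    rw [show jn - i + 1 - 1 = jn - i from rfl, List.getElem?_take,
      if_pos (by omega), List.getElem?_drop, show i + (jn - i) = jn by omega]
    exact hjw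

lemma chain'_and : ∀ {l : List V} {R S : V → V → Prop},
    l.Chain' R → l.Chain' S → l.Chain' (fun a b => R a b ∧ S a b)
  | [], _, _, _, _ => List.isChain_nil
  | [x], _, _, _, _ => List.isChain_singleton x
  | x :: y :: t, R, S, hR, hS => by
    obtain ⟨hr1, hr2⟩ := List.isChain_cons_cons.1 hR
    obtain ⟨hs1, hs2⟩ := List.isChain_cons_cons.1 hS
    exact List.isChain_cons_cons.2 ⟨⟨hr1, hs1⟩, chain'_and hr2 hs2⟩

lemma exists_walk (G : SimpleGraph V) : ∀ (q : List V) (u w : V),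
    q.head? = some u → q.getLast? = some w → q.Chain' G.Adj →
    ∃ wk : G.Walk u w, wk.support = q
  | [], u, w, hh, _, _ => by simp at hh
  | [x], u, w, hh, hl, _ => by
    have h1 : x = u := by simpa using hh
    have h2 : x = w := by simpa using hl
    subst h1; subst h2
    exact ⟨SimpleGraph.Walk.nil, rfl⟩
  | x :: y :: t, u, w, hh, hl, hc => by
    simp only [List.head?_cons, Option.some.injEq] at hh
    subst hh
    rw [List.getLast?_cons_cons] at hl
    obtain ⟨hadj, hc'⟩ := List.isChain_cons_cons.1 hc
    obtain ⟨wk, hwk⟩ := exists_walk G (y :: t) y w rfl hl hc'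
    exact ⟨SimpleGraph.Walk.cons hadj wk, by simp [hwk]⟩

lemma list_path_unique {A : Set (V × V)} (hT : (undirected A).IsTree)
    {q1 q2 : List V} {u w : V}
    (h1 : q1.head? = some u) (h1l : q1.getLast? = some w)
    (h1c : q1.Chain' (fun a b => (a, b) ∈ A)) (h1n : q1.Nodup)
    (h2 : q2.head? = some u) (h2l : q2.getLast? = some w)
    (h2c : q2.Chain' (fun a b => (a, b) ∈ A)) (h2n : q2.Nodup) :
    q1 = q2 := by
  have adj1 : q1.Chain' (undirected A).Adj :=
    (chain'_and h1n.isChain h1c).imp (fun a b hab => ⟨hab.1, Or.inl hab.2⟩)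
  have adj2 : q2.Chain' (undirected A).Adj :=
    (chain'_and h2n.isChain h2c).imp (fun a b hab => ⟨hab.1, Or.inl hab.2⟩)
  obtain ⟨wk1, hs1⟩ := exists_walk _ q1 u w h1 h1l adj1
  obtain ⟨wk2, hs2⟩ := exists_walk _ q2 u w h2 h2l adj2
  have hp1 : wk1.IsPath := (SimpleGraph.Walk.isPath_def _).2 (hs1 ▸ h1n)
  have hp2 : wk2.IsPath := (SimpleGraph.Walk.isPath_def _).2 (hs2 ▸ h2n)
  have heq := hT.2.path_unique ⟨wk1, hp1⟩ ⟨wk2, hp2⟩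
  have hv : wk1 = wk2 := congrArg Subtype.val heq
  rw [← hs1, ← hs2, hv]

/-- In a tree instance, for any node set `W` and commodities `k, j ∈ K`,
`δ⁺_{P_k}(W) ∩ δ⁺_{P_j}(W) = ∅` iff `δ⁺_{cl(P_k)}(W) ∩ δ⁺_{cl(P_j)}(W) = ∅`. -/
theorem cuts_disjoint_iff_cl_cuts_disjoint [Fintype V] [DecidableEq V]
    (A : Set (V × V)) (K : Finset (V × V)) (P : V × V → List V)
    (hI : IsTreeInstance A K P) (W : Set V)
    (k j : V × V) (hk : k ∈ K) (hj : j ∈ K) :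
    cut (listArcs (P k)) W ∩ cut (listArcs (P j)) W = ∅ ↔
      cut (cl (listArcs (P k))) W ∩ cut (cl (listArcs (P j))) W = ∅ := by
  obtain ⟨-, -, hT, hP⟩ := hI
  obtain ⟨⟨-, -, -, hck⟩, hndk⟩ := hP k hk
  obtain ⟨⟨-, -, -, hcj⟩, hndj⟩ := hP j hj
  constructor
  · -- arcs cuts disjoint → cl cuts disjoint
    intro hdisj
    rw [Set.eq_empty_iff_forall_notMem]
    rintro ⟨u, w⟩ ⟨⟨⟨hne, hrk⟩, huW, hwW⟩, ⟨⟨-, hrj⟩, -, -⟩⟩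
    rcases reach_index hndk hrk with heuw | ⟨ik, jk, hijk, hiuk, hjwk⟩
    · exact hne heuw
    rcases reach_index hndj hrj with heuw | ⟨ij, jj, hijj, hiuj, hjwj⟩
    · exact hne heuw
    obtain ⟨qk, hqkI, hqkh, hqkl⟩ := segAux hijk hiuk hjwk
    obtain ⟨qj, hqjI, hqjh, hqjl⟩ := segAux hijj hiuj hjwj
    have hqkn : qk.Nodup := hqkI.sublist.nodup hndk
    have hqjn : qj.Nodup := hqjI.sublist.nodup hndj
    have hqkc : qk.Chain' (fun a b => (a, b) ∈ A) := hck.infix hqkI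
    have hqjc : qj.Chain' (fun a b => (a, b) ∈ A) := hcj.infix hqjI
    have heq : qk = qj :=
      list_path_unique hT hqkh hqkl hqkc hqkn hqjh hqjl hqjc hqjn
    obtain ⟨a, b, harc, haW, hbW⟩ := crossing W hqkh hqkl huW hwW
    have hmemk : (a, b) ∈ listArcs (P k) := listArcs_mono_infix hqkI harc
    have hmemj : (a, b) ∈ listArcs (P j) :=
      listArcs_mono_infix hqjI (heq ▸ harc)
    have : (a, b) ∈ cut (listArcs (P k)) W ∩ cut (listArcs (P j)) W :=
      ⟨⟨hmemk, haW, hbW⟩, ⟨hmemj, haW, hbW⟩⟩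
    rw [hdisj] at this
    exact this
  · -- cl cuts disjoint → arcs cuts disjoint
    intro hdisj
    have key : ∀ (p : List V), p.Nodup → listArcs p ⊆ cl (listArcs p) := by
      intro p hnd a ha
      obtain ⟨i, h1, h2⟩ :=
        arcs_index (p := p) (a := a.1) (b := a.2) (by simpa using ha)
      obtain ⟨hl1, he1⟩ := List.getElem?_eq_some_iff.1 h1
      obtain ⟨hl2, he2⟩ := List.getElem?_eq_some_iff.1 h2
      refine ⟨fun hab => ?_, Relation.ReflTransGen.single (by simpa using ha)⟩
      have : i = i + 1 := (hnd.getElem_inj_iff).1 (by rw [he1, he2, hab])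
      omega
    rw [Set.eq_empty_iff_forall_notMem]
    rintro a ⟨⟨hEk, haW, hbW⟩, ⟨hEj, -, -⟩⟩
    have : a ∈ cut (cl (listArcs (P k))) W ∩ cut (cl (listArcs (P j))) W :=
      ⟨⟨key _ hndk hEk, haW, hbW⟩, ⟨key _ hndj hEj, haW, hbW⟩⟩
    rw [hdisj] at this
    exact this
end

section
/- Let I = (D, K) be a tree instance. Let W ⊆ N be such that the subgraph of D induced by W is connected, and let K' ⊆ K be nonempty with s_k ∈ W and t_k ∉ W for all k ∈ K', and with δ⁺_{P_k}(W) ∩ δ⁺_{P_j}(W) = ∅ for all distinct k, j ∈ K'. Then Δ* ≥ ⌈(|K'| + |W| − |S(K')|)/|W|⌉. -/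
open scoped Classical

variable {V : Type*}

lemma mem_listArcs {p : List V} {a : V × V} :
    a ∈ listArcs p ↔ ∃ i : ℕ, ∃ h : i + 1 < p.length, a = (p.get ⟨i, by omega⟩, p.get ⟨i+1, h⟩) := by
  constructor
  · intro h
    rw [listArcs, Set.mem_setOf_eq, List.mem_iff_get] at h
    obtain ⟨n, hn⟩ := h
    have hl : (p.zip p.tail).length = p.length - 1 := by
      simp [List.length_zip, List.length_tail]
    have hn2 : (n : ℕ) + 1 < p.length := by have := n.isLt; omega
    refine ⟨n, hn2, ?_⟩
    rw [← hn]
    have := n.isLt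
    simp only [List.get_eq_getElem, List.getElem_zip, List.getElem_tail]
  · rintro ⟨i, h, rfl⟩
    rw [listArcs, Set.mem_setOf_eq, List.mem_iff_get]
    have hl : (p.zip p.tail).length = p.length - 1 := by
      simp [List.length_zip, List.length_tail]
    refine ⟨⟨i, by omega⟩, ?_⟩
    simp only [List.get_eq_getElem, List.getElem_zip, List.getElem_tail]

lemma listArcs_chain' {p : List V} {R : V → V → Prop} (hc : p.Chain' R) {a : V × V}
    (ha : a ∈ listArcs p) : R a.1 a.2 := by
  obtain ⟨i, h, rfl⟩ := mem_listArcs.1 ha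
  exact List.isChain_iff_getElem.1 hc i (by omega)

lemma listArcs_ne {p : List V} (hnd : p.Nodup) {a : V × V} (ha : a ∈ listArcs p) :
    a.1 ≠ a.2 := by
  obtain ⟨i, h, rfl⟩ := mem_listArcs.1 ha
  intro hh
  have := (List.Nodup.get_inj_iff hnd).1 hh
  simp [Fin.ext_iff] at this

/-- First crossing of a cut along a list. -/
lemma exists_first_crossing {p : List V} {s t : V} {U : Set V}
    (hne : p ≠ []) (hh : p.head? = some s) (hl : p.getLast? = some t)
    (hs : s ∈ U) (ht : t ∉ U) :
    ∃ i : ℕ, ∃ h : i + 1 < p.length,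
      (∀ j (hj : j ≤ i), p.get ⟨j, by omega⟩ ∈ U) ∧ p.get ⟨i+1, h⟩ ∉ U := by
  have hlen : 0 < p.length := List.length_pos_iff.2 hne
  have h0 : p.get ⟨0, hlen⟩ = s := by
    rw [List.head?_eq_head hne] at hh
    simpa [List.head_eq_getElem] using hh
  have hlast : p.get ⟨p.length - 1, by omega⟩ = t := by
    rw [List.getLast?_eq_getLast hne] at hl
    simpa [List.getLast_eq_getElem] using hl
  classical
  have hex : ∃ j : ℕ, ∃ hj : j < p.length, p.get ⟨j, hj⟩ ∉ U :=
    ⟨p.length - 1, by omega, by rw [hlast]; exact ht⟩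
  let Q : ℕ → Prop := fun j => ∃ hj : j < p.length, p.get ⟨j, hj⟩ ∉ U
  have hexQ : ∃ j, Q j := hex
  let j0 := Nat.find hexQ
  have hQ : Q j0 := Nat.find_spec hexQ
  obtain ⟨hj0, hj0U⟩ := hQ
  have hj0ne : j0 ≠ 0 := by
    intro h
    apply hj0U
    have : p.get ⟨j0, hj0⟩ = s := by
      rw [← h0]; congr 1; exact Fin.ext h
    rw [this]; exact hs
  refine ⟨j0 - 1, by omega, ?_, ?_⟩
  · intro j hj
    by_contra hjU
    have : j0 ≤ j := Nat.find_le ⟨by omega, hjU⟩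
    omega
  · have hj0pos : 1 ≤ j0 := Nat.pos_of_ne_zero hj0ne
    have hfin : (⟨j0 - 1 + 1, by omega⟩ : Fin p.length) = ⟨j0, hj0⟩ := by apply Fin.ext; simp only [Fin.val_mk]; omega
    rw [hfin]
    exact hj0U

/-- Build an undirected walk from reflexive-transitive reachability along arcs. -/
lemma exists_walk_of_rtg {A E : Set (V × V)}
    (hadj : ∀ u w : V, (u, w) ∈ E → (undirected A).Adj u w) {a b : V}
    (h : Relation.ReflTransGen (fun u w => (u, w) ∈ E) a b) :
    ∃ w : (undirected A).Walk a b, ∀ d ∈ w.darts, d.toProd ∈ E := by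
  induction h with
  | refl => exact ⟨SimpleGraph.Walk.nil, by simp⟩
  | tail _ hbc ih =>
    obtain ⟨w, hw⟩ := ih
    refine ⟨w.concat (hadj _ _ hbc), ?_⟩
    intro d hd
    rw [SimpleGraph.Walk.darts_concat, List.concat_eq_append, List.mem_append, List.mem_singleton] at hd
    rcases hd with hd | hd
    · exact hw d hd
    · rw [hd]; exact hbc

/-- A walk from inside `U` to outside `U` has a crossing dart. -/
lemma exists_crossing_dart {G : SimpleGraph V} {U : Set V} {a b : V} (w : G.Walk a b)
    (ha : a ∈ U) (hb : b ∉ U) :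
    ∃ d ∈ w.darts, d.toProd.1 ∈ U ∧ d.toProd.2 ∉ U := by
  induction w with
  | nil => exact absurd ha hb
  | @cons u v c h q ih =>
    by_cases hv : v ∈ U
    · obtain ⟨d, hd, hd1, hd2⟩ := ih hv hb
      exact ⟨d, by simp [hd], hd1, hd2⟩
    · exact ⟨⟨(u, v), h⟩, by simp, ha, hv⟩

/-- Key tree lemma: two closure-arcs between the same endpoints crossing a cut
force a common cut arc of the two underlying paths. -/
lemma tree_common_cut_arc {A : Set (V × V)} (hT : (undirected A).IsTree)
    {q1 q2 : List V} {s1 t1 s2 t2 : V}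
    (h1 : IsDipath A q1 s1 t1) (h2 : IsDipath A q2 s2 t2) {a b : V} {U : Set V}
    (hab1 : (a, b) ∈ cl (listArcs q1)) (hab2 : (a, b) ∈ cl (listArcs q2))
    (ha : a ∈ U) (hb : b ∉ U) :
    ∃ e, e ∈ cut (listArcs q1) U ∩ cut (listArcs q2) U := by
  have hadj1 : ∀ u w : V, (u, w) ∈ listArcs q1 → (undirected A).Adj u w := fun u w h =>
    ⟨listArcs_ne h1.2 h, Or.inl (listArcs_chain' h1.1.2.2.2 h)⟩
  have hadj2 : ∀ u w : V, (u, w) ∈ listArcs q2 → (undirected A).Adj u w := fun u w h =>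
    ⟨listArcs_ne h2.2 h, Or.inl (listArcs_chain' h2.1.2.2.2 h)⟩
  obtain ⟨w1, hw1⟩ := exists_walk_of_rtg hadj1 hab1.2
  obtain ⟨w2, hw2⟩ := exists_walk_of_rtg hadj2 hab2.2
  have huniq := hT.existsUnique_path a b
  have heq : w1.bypass = w2.bypass :=
    (huniq.unique w1.bypass_isPath w2.bypass_isPath)
  obtain ⟨d, hd, hd1, hd2⟩ := exists_crossing_dart w1.bypass ha hb
  have hdq1 : d.toProd ∈ listArcs q1 := hw1 d (SimpleGraph.Walk.darts_bypass_subset w1 hd)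
  have hdq2 : d.toProd ∈ listArcs q2 := by
    rw [heq] at hd
    exact hw2 d (SimpleGraph.Walk.darts_bypass_subset w2 hd)
  exact ⟨d.toProd, ⟨hdq1, hd1, hd2⟩, ⟨hdq2, hd1, hd2⟩⟩

lemma chain'_getD {p : List V} {R : V → V → Prop} (hc : p.Chain' R) {j : ℕ}
    (h : j + 1 < p.length) (d : V) : R (p.getD j d) (p.getD (j+1) d) := by
  rw [List.getD_eq_getElem _ _ (by omega : j < p.length), List.getD_eq_getElem _ _ h]
  exact List.isChain_iff_getElem.1 hc j (by omega)

lemma crossing_package [DecidableEq V] {E : Set (V × V)} {p : List V} {W : Set V} {s t : V}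
    (hp : IsDipath E p s t) (hs : s ∈ W) (ht : t ∉ W) :
    ∃ (a : V × V) (Q : Finset (V × V)),
      a ∈ E ∧ a.1 ∈ W ∧ a.2 ∉ W ∧
      (∀ e ∈ Q, e ∈ E ∧ e.1 ∈ W ∧ e.2 ∈ W) ∧
      (a.1 = s ∨ ∃ f ∈ Q, a.1 = f.2) ∧
      (∀ e ∈ Q, e.1 = s ∨ ∃ f ∈ Q, e.1 = f.2) := by
  obtain ⟨⟨hne, hh, hl, hc⟩, hnd⟩ := hp
  obtain ⟨i, hilen, hW, hout⟩ := exists_first_crossing hne hh hl hs ht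
  set g : ℕ → V := fun j => p.getD j s with hg
  have hgget : ∀ j (h : j < p.length), g j = p.get ⟨j, h⟩ := by
    intro j h
    simp only [hg]
    rw [List.getD_eq_getElem _ _ h, List.get_eq_getElem]
  have hgW : ∀ j, j ≤ i → g j ∈ W := by
    intro j hj
    rw [hgget j (by omega)]; exact hW j hj
  have hgout : g (i+1) ∉ W := by rw [hgget (i+1) hilen]; exact hout
  have hg0 : g 0 = s := by
    rw [hgget 0 (by omega)]
    rw [List.head?_eq_head hne] at hh
    simpa [List.head_eq_getElem] using hh
  have harc : ∀ j, j + 1 < p.length → (g j, g (j+1)) ∈ E := by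
    intro j h
    exact chain'_getD hc h s
  refine ⟨(g i, g (i+1)), (Finset.range i).image (fun j => (g j, g (j+1))), ?_, ?_, ?_, ?_, ?_, ?_⟩
  · exact harc i hilen
  · exact hgW i le_rfl
  · exact hgout
  · intro e he
    obtain ⟨j, hj, rfl⟩ := Finset.mem_image.1 he
    rw [Finset.mem_range] at hj
    exact ⟨harc j (by omega), hgW j (by omega), hgW (j+1) (by omega)⟩
  · rcases Nat.eq_zero_or_pos i with h0 | h0
    · left; rw [h0, hg0]
    · right
      refine ⟨(g (i-1), g (i-1+1)), Finset.mem_image.2 ⟨i-1, Finset.mem_range.2 (by omega), rfl⟩, ?_⟩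
      simp only
      congr 1
      omega
  · intro e he
    obtain ⟨j, hj, rfl⟩ := Finset.mem_image.1 he
    rw [Finset.mem_range] at hj
    rcases Nat.eq_zero_or_pos j with h0 | h0
    · left; simp only; rw [h0, hg0]
    · right
      refine ⟨(g (j-1), g (j-1+1)), Finset.mem_image.2 ⟨j-1, Finset.mem_range.2 (by omega), rfl⟩, ?_⟩
      simp only
      congr 1
      omega

theorem deltaStar_ge_witness_lower_bound [Fintype V] [DecidableEq V]
    (A : Set (V × V)) (K : Finset (V × V)) (P : V × V → List V)
    (hI : IsTreeInstance A K P)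
    (hfeas : ∃ H, Feasible A K P H)
    (W : Finset V)
    (hWconn : (SimpleGraph.induce (W : Set V) (undirected A)).Connected)
    (K' : Finset (V × V)) (hK'sub : K' ⊆ K) (hK'ne : K'.Nonempty)
    (hsrc : ∀ k ∈ K', k.1 ∈ W) (hsink : ∀ k ∈ K', k.2 ∉ W)
    (hdisj : ∀ k ∈ K', ∀ j ∈ K', k ≠ j →
      cut (listArcs (P k)) (W : Set V) ∩ cut (listArcs (P j)) (W : Set V) = ∅) :
    ⌈((K'.card : ℚ) + W.card - (srcs K').card) / W.card⌉ ≤ (DeltaStar A K P : ℤ) := by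
  classical
  obtain ⟨hKne, hKnt, hTree, hP⟩ := hI
  -- pick an optimal feasible subgraph H
  have hSne : {d | ∃ H, Feasible A K P H ∧ maxOutDeg H = d}.Nonempty := by
    obtain ⟨H0, hH0⟩ := hfeas; exact ⟨maxOutDeg H0, H0, hH0, rfl⟩
  obtain ⟨H, hHfeas, hHM⟩ := Nat.sInf_mem hSne
  set M := maxOutDeg H with hMdef
  have hDS : DeltaStar A K P = M := by unfold DeltaStar; exact hHM.symm
  -- per-commodity crossing data
  have hpack : ∀ k : {x // x ∈ K'}, ∃ (a : V × V) (Q : Finset (V × V)),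
      a ∈ H ∩ cl (listArcs (P k.1)) ∧ a.1 ∈ (W : Set V) ∧ a.2 ∉ (W : Set V) ∧
      (∀ e ∈ Q, e ∈ H ∩ cl (listArcs (P k.1)) ∧ e.1 ∈ (W : Set V) ∧ e.2 ∈ (W : Set V)) ∧
      (a.1 = k.1.1 ∨ ∃ f ∈ Q, a.1 = f.2) ∧
      (∀ e ∈ Q, e.1 = k.1.1 ∨ ∃ f ∈ Q, e.1 = f.2) := by
    intro k
    obtain ⟨pk, hpk⟩ := hHfeas.2 k.1 (hK'sub k.2)
    exact crossing_package hpk (hsrc k.1 k.2) (hsink k.1 k.2)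
  choose c Qf hcH hcW1 hcW2 hQ hsrcprop htailprop using hpack
  -- injectivity of the crossing arcs
  have hcinj : Function.Injective c := by
    intro k j hkj
    by_contra hne
    have hkj' : k.1 ≠ j.1 := fun h => hne (Subtype.ext h)
    have hck1 : ((c k).1, (c k).2) ∈ cl (listArcs (P k.1)) := by
      rw [Prod.mk.eta]; exact (hcH k).2
    have hck2 : ((c k).1, (c k).2) ∈ cl (listArcs (P j.1)) := by
      rw [Prod.mk.eta, hkj]; exact (hcH j).2
    obtain ⟨e, he⟩ := tree_common_cut_arc hTree (hP k.1 (hK'sub k.2)) (hP j.1 (hK'sub j.2))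
      hck1 hck2 (hcW1 k) (hcW2 k)
    rw [hdisj k.1 k.2 j.1 j.2 hkj'] at he
    exact he
  -- the counted arc sets
  set C : Finset (V × V) := Finset.univ.image c with hCdef
  set Pre : Finset (V × V) := Finset.univ.biUnion Qf with hPredef
  set F : Finset (V × V) := C ∪ Pre with hFdef
  set T : Finset V := F.image Prod.fst with hTdef
  have hmemC : ∀ e ∈ C, ∃ k, e = c k := by
    intro e he
    obtain ⟨k, _, rfl⟩ := Finset.mem_image.1 he
    exact ⟨k, rfl⟩
  have hmemPre : ∀ e ∈ Pre, ∃ k, e ∈ Qf k := by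
    intro e he
    obtain ⟨k, _, hk⟩ := Finset.mem_biUnion.1 he
    exact ⟨k, hk⟩
  have hFH : ∀ e ∈ F, e ∈ H := by
    intro e he
    rcases Finset.mem_union.1 he with h | h
    · obtain ⟨k, rfl⟩ := hmemC e h; exact (hcH k).1
    · obtain ⟨k, hk⟩ := hmemPre e h; exact ((hQ k e hk).1).1
  have hCcard : C.card = K'.card := by
    rw [hCdef, Finset.card_image_of_injective _ hcinj, Finset.card_univ, Fintype.card_coe]
  have hdisjCP : Disjoint C Pre := by
    rw [Finset.disjoint_left]
    intro e heC hePre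
    obtain ⟨k, rfl⟩ := hmemC e heC
    obtain ⟨j, hj⟩ := hmemPre _ hePre
    exact (hcW2 k) ((hQ j _ hj).2.2)
  have hFcard : F.card = K'.card + Pre.card := by
    rw [hFdef, Finset.card_union_of_disjoint hdisjCP, hCcard]
  set PreH : Finset V := Pre.image Prod.snd with hPreHdef
  have hPreHcard : PreH.card ≤ Pre.card := Finset.card_image_le
  -- tails not in srcs are heads of prefix arcs
  have hTS : T \ srcs K' ⊆ PreH := by
    intro v hv
    rw [Finset.mem_sdiff] at hv
    obtain ⟨hvT, hvS⟩ := hv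
    obtain ⟨e, heF, hev⟩ := Finset.mem_image.1 hvT
    have hsrcmem : ∀ k : {x // x ∈ K'}, v ≠ k.1.1 := by
      intro k h
      exact hvS (Finset.mem_image.2 ⟨k.1, k.2, h.symm⟩)
    rcases Finset.mem_union.1 heF with h | h
    · obtain ⟨k, rfl⟩ := hmemC e h
      rcases hsrcprop k with h1 | ⟨f, hf, h1⟩
      · exact absurd (hev ▸ h1 : v = k.1.1) (hsrcmem k)
      · refine Finset.mem_image.2 ⟨f, Finset.mem_biUnion.2 ⟨k, Finset.mem_univ k, hf⟩, ?_⟩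
        rw [← h1, hev]
    · obtain ⟨k, hk⟩ := hmemPre e h
      rcases htailprop k e hk with h1 | ⟨f, hf, h1⟩
      · exact absurd (hev ▸ h1 : v = k.1.1) (hsrcmem k)
      · refine Finset.mem_image.2 ⟨f, Finset.mem_biUnion.2 ⟨k, Finset.mem_univ k, hf⟩, ?_⟩
        rw [← h1, hev]
  have hTcard : T.card ≤ Pre.card + (srcs K').card := by
    calc T.card ≤ (T \ srcs K').card + (srcs K').card := Finset.card_le_card_sdiff_add_card
    _ ≤ PreH.card + (srcs K').card := Nat.add_le_add_right (Finset.card_le_card hTS) _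
    _ ≤ Pre.card + (srcs K').card := by gcongr
  -- F.card ≤ T.card * M
  have houtle : ∀ v : V, outDeg H v ≤ M := fun v => Finset.le_sup (Finset.mem_univ v)
  have hfiber : ∀ v ∈ T, (F.filter fun e => e.1 = v).card ≤ M := by
    intro v _
    have hinj : Set.InjOn Prod.snd ((F.filter fun e => e.1 = v) : Set (V × V)) := by
      intro e he f hf hef
      simp only [Finset.coe_filter, Set.mem_setOf_eq] at he hf
      exact Prod.ext (he.2.trans hf.2.symm) hef
    have hcard : (F.filter fun e => e.1 = v).card
        = ((F.filter fun e => e.1 = v).image Prod.snd).card :=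
      (Finset.card_image_of_injOn hinj).symm
    have hsub : (((F.filter fun e => e.1 = v).image Prod.snd) : Set V) ⊆ {w | (v, w) ∈ H} := by
      intro w hw
      simp only [Finset.coe_image, Set.mem_image, Finset.mem_coe, Finset.mem_filter] at hw
      obtain ⟨e, ⟨heF, hev⟩, rfl⟩ := hw
      have := hFH e heF
      rwa [Set.mem_setOf_eq, ← hev, Prod.mk.eta]
    calc (F.filter fun e => e.1 = v).card
        = ((F.filter fun e => e.1 = v).image Prod.snd).card := hcard
      _ = (((F.filter fun e => e.1 = v).image Prod.snd : Finset V) : Set V).ncard :=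
          (Set.ncard_coe_finset _).symm
      _ ≤ {w | (v, w) ∈ H}.ncard := Set.ncard_le_ncard hsub (Set.toFinite _)
      _ = outDeg H v := rfl
      _ ≤ M := houtle v
  have hFT : F.card ≤ T.card * M := by
    have h1 : F.card = ∑ v ∈ T, (F.filter fun e => e.1 = v).card :=
      Finset.card_eq_sum_card_fiberwise (fun e he => Finset.mem_image_of_mem _ he)
    rw [h1]
    calc ∑ v ∈ T, (F.filter fun e => e.1 = v).card ≤ T.card • M :=
          Finset.sum_le_card_nsmul T _ M (fun v hv => hfiber v hv)
      _ = T.card * M := by rw [smul_eq_mul]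
  -- basic positivity facts
  obtain ⟨k0, hk0⟩ := hK'ne
  set k0' : {x // x ∈ K'} := ⟨k0, hk0⟩ with hk0'def
  have hck0F : c k0' ∈ F :=
    Finset.mem_union.2 (Or.inl (Finset.mem_image.2 ⟨k0', Finset.mem_univ _, rfl⟩))
  have hM1 : 1 ≤ M := by
    have h1 : (c k0').2 ∈ {w | ((c k0').1, w) ∈ H} := by
      rw [Set.mem_setOf_eq, Prod.mk.eta]; exact (hcH k0').1
    have h2 : 1 ≤ outDeg H (c k0').1 := by
      rw [outDeg]
      exact (Set.ncard_pos (Set.toFinite _)).2 ⟨_, h1⟩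
    exact h2.trans (houtle _)
  have hT1 : 1 ≤ T.card := by
    rw [Nat.one_le_iff_ne_zero, ← Nat.pos_iff_ne_zero, Finset.card_pos]
    exact ⟨(c k0').1, Finset.mem_image_of_mem _ hck0F⟩
  have hTW : T ⊆ W := by
    intro v hv
    obtain ⟨e, heF, hev⟩ := Finset.mem_image.1 hv
    rcases Finset.mem_union.1 heF with h | h
    · obtain ⟨k, rfl⟩ := hmemC e h
      exact hev ▸ (hcW1 k)
    · obtain ⟨k, hk⟩ := hmemPre e h
      exact hev ▸ ((hQ k e hk).2.1)
  have hTWcard : T.card ≤ W.card := Finset.card_le_card hTW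
  have hWpos : 0 < W.card := lt_of_lt_of_le hT1 hTWcard
  -- main counting inequality
  have hmain : K'.card + W.card ≤ W.card * M + (srcs K').card := by
    have h1 : K'.card + T.card ≤ T.card * M + (srcs K').card := by
      have := hFT
      omega
    have h2 : (W.card - T.card) ≤ (W.card - T.card) * M := Nat.le_mul_of_pos_right _ hM1
    have h3 : T.card * M + (W.card - T.card) * M = W.card * M := by
      rw [← Nat.add_mul]
      congr 1
      omega
    omega
  -- conclude
  rw [hDS, Int.ceil_le]
  have hWQ : (0 : ℚ) < (W.card : ℚ) := by exact_mod_cast hWpos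
  rw [div_le_iff₀ hWQ]
  have hc : (K'.card : ℚ) + W.card ≤ W.card * M + (srcs K').card := by exact_mod_cast hmain
  push_cast
  linarith
end

section
/- Let I = (D, K) be a tree instance. Let W ⊆ N be such that the subgraph of D induced by W is connected, and let K' ⊆ K be nonempty with s_k ∈ W and t_k ∉ W for all k ∈ K', and with δ⁺_{P_k}(W) ∩ δ⁺_{P_j}(W) = ∅ for all distinct k, j ∈ K'. Then Δ* ≥ ⌈|K'|/|W|⌉. -/
open scoped Classical

variable {V : Type*}

section Aux

variable {V : Type*}

lemma listArcs_mem_of_chain' {R : V → V → Prop} :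
    ∀ {p : List V}, p.Chain' R → ∀ {a b : V}, (a, b) ∈ listArcs p → R a b := by
  intro p
  induction p with
  | nil => intro _ a b h; simp [listArcs] at h
  | cons x q ih =>
    intro hc a b h
    cases q with
    | nil => simp [listArcs] at h
    | cons y r =>
      simp only [List.Chain', List.isChain_cons_cons] at hc
      simp only [listArcs, Set.mem_setOf_eq, List.tail, List.zip_cons_cons,
        List.mem_cons, Prod.mk.injEq] at h
      rcases h with ⟨ha, hb⟩ | h
      · subst ha; subst hb; exact hc.1
      · exact ih hc.2 h

lemma mem_of_mem_listArcs : ∀ {p : List V} {a b : V},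
    (a, b) ∈ listArcs p → a ∈ p ∧ b ∈ p := by
  intro p a b h
  simp only [listArcs, Set.mem_setOf_eq] at h
  have := List.of_mem_zip h
  exact ⟨this.1, List.mem_of_mem_tail this.2⟩

lemma ne_of_mem_listArcs_nodup : ∀ {p : List V}, p.Nodup →
    ∀ {a b : V}, (a, b) ∈ listArcs p → a ≠ b := by
  intro p
  induction p with
  | nil => intro _ a b h; simp [listArcs] at h
  | cons x q ih =>
    intro hn a b h
    cases q with
    | nil => simp [listArcs] at h
    | cons y r =>
      simp only [listArcs, Set.mem_setOf_eq, List.tail, List.zip_cons_cons,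
        List.mem_cons, Prod.mk.injEq] at h
      rcases h with ⟨ha, hb⟩ | h
      · subst ha; subst hb
        intro hxy
        exact (List.nodup_cons.mp hn).1 (hxy ▸ List.mem_cons_self)
      · exact ih (List.nodup_cons.mp hn).2 h

lemma rev_not_mem_listArcs_nodup : ∀ {p : List V}, p.Nodup →
    ∀ {a b : V}, (a, b) ∈ listArcs p → (b, a) ∉ listArcs p := by
  intro p
  induction p with
  | nil => intro _ a b h; simp [listArcs] at h
  | cons x q ih =>
    intro hn a b h hrev
    cases q with
    | nil => simp [listArcs] at h
    | cons y r =>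
      have hn' := List.nodup_cons.mp hn
      simp only [listArcs, Set.mem_setOf_eq, List.tail, List.zip_cons_cons,
        List.mem_cons, Prod.mk.injEq] at h hrev
      rcases h with ⟨ha, hb⟩ | h
      · subst ha; subst hb
        rcases hrev with ⟨hb', ha'⟩ | hrev
        · exact hn'.1 (ha' ▸ List.mem_cons_self)
        · exact hn'.1 (mem_of_mem_listArcs hrev).2
      · rcases hrev with ⟨hb', ha'⟩ | hrev
        · subst hb'; subst ha'
          exact hn'.1 (mem_of_mem_listArcs h).2
        · exact ih hn'.2 h hrev

lemma reflTransGen_of_isDiwalk {E : Set (V × V)} :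
    ∀ {p : List V} {s t : V}, IsDiwalk E p s t →
      Relation.ReflTransGen (fun u w => (u, w) ∈ E) s t := by
  intro p
  induction p with
  | nil => intro s t h; exact absurd rfl h.1
  | cons x q ih =>
    intro s t h
    obtain ⟨-, hh, hl, hc⟩ := h
    simp only [List.head?_cons, Option.some.injEq] at hh
    subst hh
    cases q with
    | nil =>
      simp only [List.getLast?_singleton, Option.some.injEq] at hl
      subst hl; exact Relation.ReflTransGen.refl
    | cons y r =>
      simp only [List.Chain', List.isChain_cons_cons] at hc
      have hl' : (y :: r).getLast? = some t := by
        rw [List.getLast?_cons_cons] at hl; exact hl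
      exact Relation.ReflTransGen.head hc.1
        (ih ⟨List.cons_ne_nil _ _, rfl, hl', hc.2⟩)

/-- Crossing lemma: a reflexive-transitive walk leaving a set must contain a
crossing step, with walks to and from it. -/
lemma exists_crossing {R : V → V → Prop} {S : Set V} {u v : V}
    (h : Relation.ReflTransGen R u v) (hu : u ∈ S) (hv : v ∉ S) :
    ∃ a b, R a b ∧ a ∈ S ∧ b ∉ S ∧ Relation.ReflTransGen R u a ∧
      Relation.ReflTransGen R b v := by
  induction h with
  | refl => exact absurd hu hv
  | @tail c w hw hstep ih =>
    by_cases hc : c ∈ S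
    · exact ⟨c, w, hstep, hc, hv, hw, Relation.ReflTransGen.refl⟩
    · obtain ⟨a, b, hab, ha, hb, h1, h2⟩ := ih hc
      exact ⟨a, b, hab, ha, hb, h1, h2.tail hstep⟩

/-- The key tree lemma: if two arc-walks along nodup paths in a tree both go from
`u ∈ W` to `v ∉ W`, then their `W`-cuts intersect. -/
lemma key_tree_lemma {A : Set (V × V)} (htree : (undirected A).IsTree)
    {p q : List V} (hpn : p.Nodup) (hqn : q.Nodup)
    (hpA : ∀ e ∈ listArcs p, e ∈ A) (hqA : ∀ e ∈ listArcs q, e ∈ A)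
    {W : Set V} {u v : V} (hu : u ∈ W) (hv : v ∉ W)
    (hp : Relation.ReflTransGen (fun x y => (x, y) ∈ listArcs p) u v)
    (hq : Relation.ReflTransGen (fun x y => (x, y) ∈ listArcs q) u v) :
    ∃ e, e ∈ cut (listArcs p) W ∩ cut (listArcs q) W := by
  classical
  set G := undirected A with hG
  obtain ⟨a, b, hab, haW, hbW, hua, hbv⟩ := exists_crossing hp hu hv
  have habA : (a, b) ∈ A := hpA _ hab
  have habne : a ≠ b := ne_of_mem_listArcs_nodup hpn hab
  have hadj : G.Adj a b := ⟨habne, Or.inl habA⟩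
  -- e := s(a,b) is a bridge
  have hbridge : ¬(G \ SimpleGraph.fromEdgeSet {s(a, b)}).Reachable a b := by
    have := (SimpleGraph.isAcyclic_iff_forall_adj_isBridge.mp htree.IsAcyclic) hadj
    exact SimpleGraph.isBridge_iff.mp this
  set G' := G \ SimpleGraph.fromEdgeSet {s(a, b)} with hG'
  set T : Set V := {x | G'.Reachable a x} with hT
  have haT : a ∈ T := SimpleGraph.Reachable.refl a
  have hbT : b ∉ T := hbridge
  -- generic step lemma for nodup lists containing arc (a,b) appropriately
  have hstep : ∀ {r : List V}, r.Nodup → (∀ e ∈ listArcs r, e ∈ A) →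
      (b, a) ∉ listArcs r → ∀ {x y : V}, (x, y) ∈ listArcs r →
      (x, y) ≠ (a, b) → (x ∈ T ↔ y ∈ T) := by
    intro r hrn hrA hba x y hxy hne
    have hxyne : x ≠ y := ne_of_mem_listArcs_nodup hrn hxy
    have hadj' : G'.Adj x y := by
      rw [hG', SimpleGraph.sdiff_adj, SimpleGraph.fromEdgeSet_adj]
      refine ⟨⟨hxyne, Or.inl (hrA _ hxy)⟩, ?_⟩
      rintro ⟨hmem, -⟩
      simp only [Set.mem_singleton_iff, Sym2.eq, Sym2.rel_iff', Prod.mk.injEq,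
        Prod.swap_prod_mk] at hmem
      rcases hmem with ⟨rfl, rfl⟩ | ⟨rfl, rfl⟩
      · exact hne rfl
      · exact hba hxy
    constructor
    · intro hx; exact hx.trans hadj'.reachable
    · intro hy; exact hy.trans hadj'.symm.reachable
  have hba_p : (b, a) ∉ listArcs p := rev_not_mem_listArcs_nodup hpn hab
  -- u ∈ T
  have huT : u ∈ T := by
    clear hp hq hu
    induction hua using Relation.ReflTransGen.head_induction_on with
    | refl => exact haT
    | @head x y hxy hya ih =>
      by_cases hne : (x, y) = (a, b)
      · rw [Prod.mk.injEq] at hne; exact hne.1 ▸ haT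
      · exact (hstep hpn hpA hba_p hxy hne).mpr ih
  -- v ∉ T
  have hvT : v ∉ T := by
    clear hp hq
    have : ∀ x, Relation.ReflTransGen (fun x y => (x, y) ∈ listArcs p) b x →
        x ∉ T := by
      intro x hx
      induction hx with
      | refl => exact hbT
      | @tail c w hbc hcw ih =>
        by_cases hne : (c, w) = (a, b)
        · rw [Prod.mk.injEq] at hne
          exact absurd (hne.1 ▸ haT) ih
        · intro hw; exact ih ((hstep hpn hpA hba_p hcw hne).mpr hw)
    exact this v hbv
  -- cross q's walk w.r.t. T
  obtain ⟨x, y, hxy, hxT, hyT, -, -⟩ := exists_crossing hq huT hvT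
  have hxyab : (x, y) = (a, b) := by
    by_contra hne
    by_cases hba : (b, a) ∈ listArcs q
    · -- then along q, arc (b,a); is (x,y) = (b,a)? x = b ∉ T contradiction... handle directly
      by_cases h2 : (x, y) = (b, a)
      · rw [Prod.mk.injEq] at h2
        exact hbT (h2.1 ▸ hxT)
      · -- step lemma variant without the rev exclusion: redo inline
        have hxyne : x ≠ y := fun h => hyT (h ▸ hxT)
        have hadj' : G'.Adj x y := by
          rw [hG', SimpleGraph.sdiff_adj, SimpleGraph.fromEdgeSet_adj]
          refine ⟨⟨hxyne, Or.inl (hqA _ hxy)⟩, ?_⟩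
          rintro ⟨hmem, -⟩
          simp only [Set.mem_singleton_iff, Sym2.eq, Sym2.rel_iff', Prod.mk.injEq,
            Prod.swap_prod_mk] at hmem
          rcases hmem with ⟨rfl, rfl⟩ | ⟨rfl, rfl⟩
          · exact hne rfl
          · exact h2 rfl
        exact hyT (hxT.trans hadj'.reachable)
    · exact hyT ((hstep hqn hqA hba hxy hne).mp hxT)
  rw [Prod.mk.injEq] at hxyab
  obtain ⟨rfl, rfl⟩ := hxyab
  exact ⟨(x, y), ⟨hab, haW, hbW⟩, ⟨hxy, haW, hbW⟩⟩

end Aux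

/-- Weak witness-set lower bound: `Δ* ≥ ⌈|K'|/|W|⌉`. -/
theorem deltaStar_ge_weak_witness_lower_bound [Fintype V] [DecidableEq V]
    (A : Set (V × V)) (K : Finset (V × V)) (P : V × V → List V)
    (hI : IsTreeInstance A K P)
    (hfeas : ∃ H, Feasible A K P H)
    (W : Finset V)
    (hWconn : (SimpleGraph.induce (W : Set V) (undirected A)).Connected)
    (K' : Finset (V × V)) (hK'sub : K' ⊆ K) (hK'ne : K'.Nonempty)
    (hsrc : ∀ k ∈ K', k.1 ∈ W) (hsink : ∀ k ∈ K', k.2 ∉ W)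
    (hdisj : ∀ k ∈ K', ∀ j ∈ K', k ≠ j →
      cut (listArcs (P k)) (W : Set V) ∩ cut (listArcs (P j)) (W : Set V) = ∅) :
    ⌈(K'.card : ℚ) / W.card⌉ ≤ (DeltaStar A K P : ℤ) := by
  classical
  obtain ⟨hKne, hnontriv, htree, hP⟩ := hI
  have hSne : {d | ∃ H, Feasible A K P H ∧ maxOutDeg H = d}.Nonempty := by
    obtain ⟨H₀, hH₀⟩ := hfeas
    exact ⟨maxOutDeg H₀, H₀, hH₀, rfl⟩
  obtain ⟨H, hHfeas, hHd⟩ := Nat.sInf_mem hSne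
  set d := DeltaStar A K P with hd
  -- choose, for each commodity, an arc of `H` crossing `W`
  have hex : ∀ k : V × V, ∃ e : V × V, k ∈ K' →
      e ∈ H ∧ e ∈ cl (listArcs (P k)) ∧ e.1 ∈ W ∧ e.2 ∉ W := by
    intro k
    by_cases hk : k ∈ K'
    · obtain ⟨p, hp⟩ := hHfeas.2 k (hK'sub hk)
      have hrt := reflTransGen_of_isDiwalk hp.1
      obtain ⟨a, b, hab, ha, hb, -, -⟩ :=
        exists_crossing (S := (W : Set V)) hrt (by exact_mod_cast hsrc k hk)
          (by simpa using hsink k hk)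
      exact ⟨(a, b), fun _ => ⟨hab.1, hab.2, by simpa using ha, by simpa using hb⟩⟩
    · exact ⟨k, fun h => absurd h hk⟩
  choose f hf using hex
  have hinj : Set.InjOn f K' := by
    intro k₁ hk₁ k₂ hk₂ hfe
    by_contra hne
    obtain ⟨-, hcl1, hW1, hW2⟩ := hf k₁ hk₁
    obtain ⟨-, hcl2, -, -⟩ := hf k₂ hk₂
    rw [← hfe] at hcl2
    have hdw1 := (hP k₁ (hK'sub hk₁))
    have hdw2 := (hP k₂ (hK'sub hk₂))
    have hkey := key_tree_lemma (A := A) htree hdw1.2 hdw2.2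
      (fun e he => by
        obtain ⟨e1, e2⟩ := e
        exact listArcs_mem_of_chain' hdw1.1.2.2.2 he)
      (fun e he => by
        obtain ⟨e1, e2⟩ := e
        exact listArcs_mem_of_chain' hdw2.1.2.2.2 he)
      (W := (W : Set V)) (u := (f k₁).1) (v := (f k₁).2)
      (by exact_mod_cast hW1) (by simpa using hW2) hcl1.2 hcl2.2
    obtain ⟨e, he⟩ := hkey
    rw [hdisj k₁ hk₁ k₂ hk₂ hne] at he
    exact he
  set F : Finset (V × V) :=
    Finset.univ.filter (fun e => e ∈ H ∧ e.1 ∈ W ∧ e.2 ∉ W) with hF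
  have hmaps : ∀ k ∈ K', f k ∈ F := by
    intro k hk
    obtain ⟨h1, -, h3, h4⟩ := hf k hk
    simp only [hF, Finset.mem_filter, Finset.mem_univ, true_and]
    exact ⟨h1, h3, h4⟩
  have hcard1 : K'.card ≤ F.card := Finset.card_le_card_of_injOn f hmaps hinj
  have hcard2 : F.card ≤ W.card * d := by
    have hsub : F ⊆ W.biUnion (fun w =>
        (Finset.univ.filter (fun x => (w, x) ∈ H)).image (fun x => (w, x))) := by
      intro e he
      simp only [hF, Finset.mem_filter, Finset.mem_univ, true_and] at he
      rw [Finset.mem_biUnion]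
      refine ⟨e.1, he.2.1, ?_⟩
      rw [Finset.mem_image]
      exact ⟨e.2, by simp [he.1], rfl⟩
    calc F.card ≤ _ := Finset.card_le_card hsub
      _ ≤ ∑ w ∈ W,
          ((Finset.univ.filter (fun x => (w, x) ∈ H)).image (fun x => (w, x))).card :=
        Finset.card_biUnion_le
      _ ≤ ∑ _w ∈ W, d := by
        refine Finset.sum_le_sum fun w _ => ?_
        refine le_trans Finset.card_image_le ?_
        have hle : outDeg H w ≤ maxOutDeg H := Finset.le_sup (Finset.mem_univ w)
        rw [hHd] at hle
        refine le_trans (le_of_eq ?_) hle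
        rw [outDeg, Set.ncard_eq_toFinset_card']
        congr 1
        ext x
        simp
      _ = W.card * d := by rw [Finset.sum_const, smul_eq_mul]
  have hWpos : 0 < W.card := by
    obtain ⟨k, hk⟩ := hK'ne
    exact Finset.card_pos.mpr ⟨k.1, hsrc k hk⟩
  have hmain : (K'.card : ℚ) ≤ (W.card : ℚ) * d := by
    exact_mod_cast le_trans hcard1 hcard2
  rw [Int.ceil_le]
  push_cast
  rw [div_le_iff₀ (by exact_mod_cast hWpos)]
  have hcomm : (W.card : ℚ) * d = (d : ℚ) * W.card := mul_comm _ _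
  linarith [hmain]
end

section
/- In the contraction setup for an out-tree instance I = (D, K) with contracted node v (v ≠ r) and target T, let X ⊆ N \ {v} be such that the subgraph of D induced by X is connected, and let k ∈ K with s_k ∈ X and t'_k ∉ V(B_v). Then δ⁺_{P_k}(X) = δ⁺_{Q_k}(X). -/
open scoped Classical

variable {V : Type*}

/-- The arcs of `A` leaving node `v`, i.e. `δ⁺_D(v)`. -/
def outArcsAt (A : Set (V × V)) (v : V) : Set (V × V) := {a ∈ A | a.1 = v}

/-- `S(a)`: the set of sources of commodities whose path uses the arc `a`. -/
def SrcsOf (K : Finset (V × V)) (P : V × V → List V) (a : V × V) : Set V :=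
  {x | ∃ k ∈ K, k.1 = x ∧ a ∈ listArcs (P k)}

/-- Reachability by a directed path in the arc set `A`. -/
def reaches (A : Set (V × V)) : V → V → Prop :=
  Relation.ReflTransGen fun u w => (u, w) ∈ A

/-- The new sink `t'_k` of commodity `k` after contracting `v`: it is `v` whenever the
old sink is the head of an arc of `Av`, and is unchanged otherwise. -/
noncomputable def tPrime (Av : Set (V × V)) (v : V) (k : V × V) : V :=
  if k.2 ∈ Prod.snd '' Av then v else k.2

/-- The arc set `D^T_v` of the contracted instance: remove the arcs leaving `v` and
add an arc `(p(v), w)` for every arc `(v, w) ∈ Bv`. -/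
def contractArcs (A : Set (V × V)) (v pv : V) (Bv : Set (V × V)) : Set (V × V) :=
  (A \ outArcsAt A v) ∪ {x | ∃ w, (v, w) ∈ Bv ∧ x = (pv, w)}

section AuxLemmas

lemma my_chain'_and {α : Type*} {R S : α → α → Prop} :
    ∀ {l : List α}, l.Chain' R → l.Chain' S → l.Chain' (fun a b => R a b ∧ S a b)
  | [], _, _ => List.isChain_nil
  | [_], _, _ => List.isChain_singleton _
  | _ :: _ :: _, hR, hS => by
    simp only [List.Chain', List.isChain_cons_cons] at hR hS ⊢
    exact ⟨⟨hR.1, hS.1⟩, my_chain'_and hR.2 hS.2⟩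

lemma my_chain'_iff_zip {α : Type*} {R : α → α → Prop} :
    ∀ {l : List α}, l.Chain' R ↔ ∀ e ∈ l.zip l.tail, R e.1 e.2
  | [] => by simp [List.Chain']
  | [a] => by simp [List.Chain']
  | a :: b :: l => by
    rw [show (a :: b :: l).Chain' R ↔ R a b ∧ (b :: l).Chain' R from List.isChain_cons_cons, my_chain'_iff_zip (l := b :: l)]
    simp only [List.tail_cons, List.zip_cons_cons, List.mem_cons]
    constructor
    · rintro ⟨h1, h2⟩ e (rfl | he)
      · exact h1
      · exact h2 e he
    · intro h
      exact ⟨h _ (Or.inl rfl), fun e he => h e (Or.inr he)⟩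

lemma my_zip_tail_append {α : Type*} {x u : α} :
    ∀ {p : List α}, p.getLast? = some u →
      (p ++ [x]).zip (p ++ [x]).tail = p.zip p.tail ++ [(u, x)]
  | [], h => by simp at h
  | [a], h => by
    simp only [List.getLast?_singleton, Option.some.injEq] at h
    subst h; simp
  | a :: b :: l, h => by
    have ih := my_zip_tail_append (x := x) (p := b :: l)
      (by rwa [List.getLast?_cons_cons] at h)
    simp only [List.cons_append, List.zip_cons_cons, List.tail_cons] at ih ⊢
    rw [ih]

lemma my_exists_succ {α : Type*} {t : α} :
    ∀ {p : List α}, p.getLast? = some t → ∀ x ∈ p, x ≠ t →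
      ∃ y, (x, y) ∈ p.zip p.tail
  | [], h => by simp at h
  | [a], h => by
    intro x hx hne
    simp only [List.getLast?_singleton, Option.some.injEq] at h
    simp only [List.mem_singleton] at hx
    exact absurd (hx.trans h) hne
  | a :: b :: l, h => by
    intro x hx hne
    rcases List.mem_cons.1 hx with rfl | hx'
    · exact ⟨b, by simp⟩
    · obtain ⟨y, hy⟩ := my_exists_succ (p := b :: l)
        (by rwa [List.getLast?_cons_cons] at h) x hx' hne
      exact ⟨y, by simp only [List.zip_cons_cons, List.tail_cons, List.mem_cons]; right; exact hy⟩

lemma my_exists_walk (G : SimpleGraph V) :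
    ∀ (p : List V) (s t : V), p.head? = some s → p.getLast? = some t →
      p.Chain' G.Adj → ∃ w : G.Walk s t, w.support = p := by
  intro p
  induction p with
  | nil => intro s t hs; simp at hs
  | cons x q ih =>
    intro s t hs ht hc
    simp only [List.head?_cons, Option.some.injEq] at hs
    subst hs
    cases q with
    | nil =>
      simp only [List.getLast?_singleton, Option.some.injEq] at ht
      subst ht
      exact ⟨SimpleGraph.Walk.nil, rfl⟩
    | cons y q' =>
      rw [List.getLast?_cons_cons] at ht
      simp only [List.Chain', List.isChain_cons_cons] at hc
      obtain ⟨w, hw⟩ := ih y t rfl ht hc.2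
      exact ⟨SimpleGraph.Walk.cons hc.1 w, by simp [hw]⟩

lemma my_dipath_unique {A : Set (V × V)} (hA : (undirected A).IsTree) {p q : List V} {s t : V}
    (hp : IsDipath A p s t) (hq : IsDipath A q s t) : p = q := by
  obtain ⟨⟨hpne, hph, hpl, hpc⟩, hpnd⟩ := hp
  obtain ⟨⟨hqne, hqh, hql, hqc⟩, hqnd⟩ := hq
  have hpadj : p.Chain' (undirected A).Adj :=
    (my_chain'_and hpc hpnd.isChain).imp fun {a b} hab => ⟨hab.2, Or.inl hab.1⟩
  have hqadj : q.Chain' (undirected A).Adj :=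
    (my_chain'_and hqc hqnd.isChain).imp fun {a b} hab => ⟨hab.2, Or.inl hab.1⟩
  obtain ⟨wp, hwp⟩ := my_exists_walk _ p s t hph hpl hpadj
  obtain ⟨wq, hwq⟩ := my_exists_walk _ q s t hqh hql hqadj
  have hpp : wp.IsPath := (SimpleGraph.Walk.isPath_def wp).2 (hwp ▸ hpnd)
  have hqp : wq.IsPath := (SimpleGraph.Walk.isPath_def wq).2 (hwq ▸ hqnd)
  have := hA.IsAcyclic.path_unique ⟨wp, hpp⟩ ⟨wq, hqp⟩
  have hweq : wp = wq := congrArg Subtype.val this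
  rw [← hwp, ← hwq, hweq]

end AuxLemmas

/-- In the contraction setup, for connected `X ⊆ N \ {v}` and a
commodity `k` with `s_k ∈ X` and `t'_k ∉ V(B_v)`, the path cuts agree:
`δ⁺_{P_k}(X) = δ⁺_{Q_k}(X)`. -/
theorem cut_eq_of_sink_not_in_Bv [Fintype V] [DecidableEq V]
    (A : Set (V × V)) (K : Finset (V × V)) (P : V × V → List V)
    (hI : IsTreeInstance A K P)
    -- `D` is an out-tree rooted at `r`
    (r : V) (hrin : ∀ u, (u, r) ∉ A) (hrreach : ∀ x, reaches A r x)
    (hindeg : ∀ u w x : V, (u, x) ∈ A → (w, x) ∈ A → u = w)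
    -- the target
    (T : ℕ) (hT : 1 ≤ T)
    -- the contracted node: a non-root non-leaf all of whose out-neighbors are leaves
    (v : V) (hvr : v ≠ r) (hvnonleaf : ∃ w, (v, w) ∈ A)
    (hvchildren : ∀ w, (v, w) ∈ A → ∀ x, (w, x) ∉ A)
    -- the parent of `v`
    (pv : V) (hpv : (pv, v) ∈ A)
    -- the blocking sources: nearest sources to the tail among `S(a)`
    (b : V × V → V)
    (hb : ∀ a ∈ outArcsAt A v, b a ∈ SrcsOf K P a ∧
      ∀ x ∈ SrcsOf K P a, reaches A x (b a))
    -- the partition `δ⁺_D(v) = Av ∪ Bv` with `|Av| = min T |δ⁺_D(v)|`, such that for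
    -- `a ∈ Av`, `a' ∈ Bv`, `b a` lies on the directed path from `b a'` to `v`
    (Av Bv : Set (V × V))
    (hunion : Av ∪ Bv = outArcsAt A v) (hABdisj : Disjoint Av Bv)
    (hAvcard : Av.ncard = min T (outArcsAt A v).ncard)
    (hblock : ∀ a ∈ Av, ∀ a' ∈ Bv, reaches A (b a') (b a) ∧ reaches A (b a) v)
    -- the node set `X ⊆ N \ {v}` inducing a connected subgraph of `D`
    (X : Set V) (hvX : v ∉ X)
    (hXconn : (SimpleGraph.induce X (undirected A)).Connected)
    -- the commodity `k` with `s_k ∈ X` and `t'_k ∉ V(B_v)`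
    (k : V × V) (hk : k ∈ K) (hsX : k.1 ∈ X)
    (ht' : tPrime Av v k ∉ Prod.snd '' Bv)
    -- `Q_k`: the unique directed `s_k,t'_k`-path in `D^T_v`
    (Q : List V) (hQ : IsDipath (contractArcs A v pv Bv) Q k.1 (tPrime Av v k)) :
    cut (listArcs (P k)) X = cut (listArcs Q) X := by
  obtain ⟨hKne, hKnt, hTree, hPk⟩ := hI
  set t' := tPrime Av v k with ht'def
  obtain ⟨⟨hQne, hQh, hQl, hQc⟩, hQnd⟩ := hQ
  have houtA : outArcsAt A v ⊆ A := fun a ha => ha.1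
  have hAvOut : Av ⊆ outArcsAt A v := hunion ▸ Set.subset_union_left
  have hBvOut : Bv ⊆ outArcsAt A v := hunion ▸ Set.subset_union_right
  -- Each arc of `Q` lies in `A` and has tail distinct from `v`.
  have hArcs : ∀ e ∈ listArcs Q, e ∈ A ∧ e.1 ≠ v := by
    intro e he
    have hecon : e ∈ contractArcs A v pv Bv := my_chain'_iff_zip.1 hQc e he
    have hne12 : e.1 ≠ e.2 := my_chain'_iff_zip.1 hQnd.isChain e he
    rcases hecon with ⟨heA, hout⟩ | ⟨w, hwBv, hew⟩
    · exact ⟨heA, fun h => hout ⟨heA, h⟩⟩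
    · exfalso
      subst hew
      have hwpv : w ≠ pv := fun h => hne12 (by simp [h])
      have hvwA : (v, w) ∈ A := houtA (hBvOut hwBv)
      have hnoout : ∀ y, (w, y) ∉ listArcs Q := by
        intro y hy
        rcases my_chain'_iff_zip.1 hQc _ hy with ⟨hA2, _⟩ | ⟨w', _, heq⟩
        · exact hvchildren w hvwA y hA2
        · exact hwpv (congrArg Prod.fst heq)
      have hwQ : w ∈ Q :=
        List.mem_of_mem_tail (List.of_mem_zip he).2
      have hwt : w = t' := by
        by_contra hne
        obtain ⟨y, hy⟩ := my_exists_succ hQl w hwQ hne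
        exact hnoout y hy
      exact ht' ⟨(v, w), hwBv, hwt⟩
  have hQA : IsDipath A Q k.1 t' :=
    ⟨⟨hQne, hQh, hQl, my_chain'_iff_zip.2 fun e he => (hArcs e he).1⟩, hQnd⟩
  by_cases h2 : k.2 ∈ Prod.snd '' Av
  · -- contracted case: `t' = v` and the last arc of `P k` is `(v, k.2)`.
    have ht'v : t' = v := by simp [ht'def, tPrime, h2]
    have hvk2 : (v, k.2) ∈ Av := by
      obtain ⟨a, haAv, ha2⟩ := h2
      have h1 : a.1 = v := (hAvOut haAv).2
      have : a = (v, k.2) := Prod.ext h1 ha2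
      rwa [← this]
    have hvk2A : (v, k.2) ∈ A := houtA (hAvOut hvk2)
    have hk2v : k.2 ≠ v := fun h => hvchildren v (h ▸ hvk2A) k.2 (h ▸ hvk2A)
    have hQlv : Q.getLast? = some v := ht'v ▸ hQl
    have hk2Q : k.2 ∉ Q := by
      intro hmem
      obtain ⟨y, hy⟩ := my_exists_succ hQlv k.2 hmem hk2v
      exact hvchildren k.2 hvk2A y (hArcs _ hy).1
    have hR : IsDipath A (Q ++ [k.2]) k.1 k.2 := by
      refine ⟨⟨by simp, ?_, List.getLast?_concat, ?_⟩, ?_⟩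
      · rw [List.head?_append, hQh]; rfl
      · simp only [List.Chain', List.isChain_append]
        refine ⟨hQA.1.2.2.2, List.isChain_singleton _, ?_⟩
        intro x hx y hy
        rw [hQlv, Option.mem_some_iff] at hx
        rw [List.head?_cons, Option.mem_some_iff] at hy
        rw [← hx, ← hy]
        exact hvk2A
      · simp [List.nodup_append, hQnd, hk2Q]
        intro a ha h
        exact hk2Q (h ▸ ha)
    have hPQ : P k = Q ++ [k.2] := my_dipath_unique hTree (hPk k hk) hR
    rw [hPQ]
    ext a
    simp only [cut, listArcs, Set.mem_setOf_eq, Set.mem_sep_iff,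
      my_zip_tail_append hQlv, List.mem_append, List.mem_singleton]
    constructor
    · rintro ⟨(ha | rfl), h1, h2⟩
      · exact ⟨ha, h1, h2⟩
      · exact absurd h1 hvX
    · rintro ⟨ha, h1, h2⟩
      exact ⟨Or.inl ha, h1, h2⟩
  · have ht'k2 : t' = k.2 := by simp [ht'def, tPrime, h2]
    rw [my_dipath_unique hTree (hPk k hk) (ht'k2 ▸ hQA)]
end

section
/- In the contraction setup for an out-tree instance I = (D, K) with contracted node v (v ≠ r) and target T, suppose |T(v)| ≤ T. Let X ⊆ N be such that the subgraph of D induced by X is connected, and let k ∈ K with s_k ∈ X, t'_k ∈ V(B_v), and t'_k ∉ X. Then either δ⁺_{P_k}(X) = δ⁺_{Q_k}(X), or δ⁺_{Q_k}(X) = {(p(v), t'_k)}. -/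
open scoped Classical

variable {V : Type*}

section ContractionHelpers

variable {V : Type*}

lemma listArcs_nil' : listArcs ([] : List V) = ∅ := by
  ext x; simp [listArcs]

lemma listArcs_singleton' (a : V) : listArcs [a] = ∅ := by
  ext x; simp [listArcs]

lemma listArcs_cons_cons' (a b : V) (l : List V) :
    listArcs (a :: b :: l) = insert (a, b) (listArcs (b :: l)) := by
  ext x; simp [listArcs]

lemma listArcs_subset' {E : Set (V × V)} :
    ∀ {l : List V}, l.Chain' (fun u w => (u, w) ∈ E) → listArcs l ⊆ E := by
  intro l
  induction l with
  | nil => intro _; rw [listArcs_nil']; exact Set.empty_subset _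
  | cons a l ih =>
    cases l with
    | nil => intro _; rw [listArcs_singleton']; exact Set.empty_subset _
    | cons b l' =>
      intro h
      simp only [List.Chain', List.isChain_cons_cons] at h
      rw [listArcs_cons_cons']
      intro x hx
      rcases Set.mem_insert_iff.mp hx with rfl | hx
      · exact h.1
      · exact ih h.2 hx

lemma chain'_of_listArcs' {E : Set (V × V)} :
    ∀ {l : List V}, listArcs l ⊆ E → l.Chain' (fun u w => (u, w) ∈ E) := by
  intro l
  induction l with
  | nil => intro _; exact List.isChain_nil
  | cons a l ih =>
    cases l with
    | nil => intro _; exact List.isChain_singleton _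
    | cons b l' =>
      intro h
      rw [listArcs_cons_cons'] at h
      simp only [List.Chain', List.isChain_cons_cons]
      exact ⟨h (Set.mem_insert _ _), ih fun x hx => h (Set.mem_insert_of_mem _ hx)⟩

lemma mem_of_mem_listArcs' :
    ∀ {l : List V} {x : V × V}, x ∈ listArcs l → x.1 ∈ l ∧ x.2 ∈ l := by
  intro l
  induction l with
  | nil => intro x hx; rw [listArcs_nil'] at hx; exact absurd hx (Set.notMem_empty _)
  | cons a l ih =>
    cases l with
    | nil => intro x hx; rw [listArcs_singleton'] at hx; exact absurd hx (Set.notMem_empty _)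
    | cons b l' =>
      intro x hx
      rw [listArcs_cons_cons'] at hx
      rcases Set.mem_insert_iff.mp hx with rfl | hx
      · exact ⟨List.mem_cons_self, List.mem_cons_of_mem _ List.mem_cons_self⟩
      · obtain ⟨h1, h2⟩ := ih hx
        exact ⟨List.mem_cons_of_mem _ h1, List.mem_cons_of_mem _ h2⟩

lemma exists_succ_of_mem' :
    ∀ {l : List V} {x u : V}, l.getLast? = some u → x ∈ l → x ≠ u →
      ∃ z, (x, z) ∈ listArcs l := by
  intro l
  induction l with
  | nil => intro x u h; simp at h
  | cons a l ih =>
    cases l with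
    | nil =>
      intro x u hlast hmem hne
      simp only [List.getLast?_singleton, Option.some_inj] at hlast
      simp only [List.mem_singleton] at hmem
      exact absurd (hmem.trans hlast) hne
    | cons b l' =>
      intro x u hlast hmem hne
      rw [List.getLast?_cons_cons] at hlast
      rcases List.mem_cons.mp hmem with rfl | hmem
      · exact ⟨b, by rw [listArcs_cons_cons']; exact Set.mem_insert _ _⟩
      · obtain ⟨z, hz⟩ := ih hlast hmem hne
        exact ⟨z, by rw [listArcs_cons_cons']; exact Set.mem_insert_of_mem _ hz⟩

lemma listArcs_append_last' :
    ∀ {l : List V} {u x : V}, l.getLast? = some u →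
      listArcs (l ++ [x]) = insert (u, x) (listArcs l) := by
  intro l
  induction l with
  | nil => intro u x h; simp at h
  | cons a l ih =>
    cases l with
    | nil =>
      intro u x hlast
      simp only [List.getLast?_singleton, Option.some_inj] at hlast
      subst hlast
      rw [List.singleton_append, listArcs_cons_cons', listArcs_singleton', listArcs_singleton']
    | cons b l' =>
      intro u x hlast
      rw [List.getLast?_cons_cons] at hlast
      have : (a :: b :: l') ++ [x] = a :: ((b :: l') ++ [x]) := rfl
      rw [this, List.cons_append, listArcs_cons_cons', ← List.cons_append, ih hlast,
        listArcs_cons_cons', Set.insert_comm]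

lemma mem_of_getLast?' {l : List V} {u : V} (h : l.getLast? = some u) : u ∈ l := by
  obtain ⟨h', rfl⟩ := List.mem_getLast?_eq_getLast h
  exact List.getLast_mem h'

lemma dipath_eq_singleton' {E : Set (V × V)} {p : List V} {s : V}
    (h : IsDipath E p s s) : p = [s] := by
  obtain ⟨⟨hne, hh, hl, _⟩, hnd⟩ := h
  cases p with
  | nil => exact absurd rfl hne
  | cons a l =>
    simp only [List.head?_cons, Option.some_inj] at hh
    subst hh
    cases l with
    | nil => rfl
    | cons b l' =>
      exfalso
      rw [List.getLast?_cons_cons] at hl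
      have hmem : a ∈ b :: l' := mem_of_getLast?' hl
      exact (List.nodup_cons.mp hnd).1 hmem

lemma dipath_decomp' {E : Set (V × V)} {p : List V} {s t : V}
    (h : IsDipath E p s t) (hst : s ≠ t) :
    ∃ (q : List V) (u : V), p = q ++ [t] ∧ q.getLast? = some u ∧ (u, t) ∈ E ∧
      IsDipath E q s u ∧ t ∉ q := by
  obtain ⟨⟨hne, hh, hl, hch⟩, hnd⟩ := h
  obtain ⟨q, hdec⟩ : ∃ q, p = q ++ [t] := by
    refine ⟨p.dropLast, ?_⟩
    have hlast : p.getLast hne = t := by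
      rw [List.getLast?_eq_getLast_of_ne_nil hne, Option.some_inj] at hl
      exact hl
    conv_lhs => rw [← List.dropLast_append_getLast hne, hlast]
  subst hdec
  have hqne : q ≠ [] := by
    rintro rfl
    rw [List.nil_append, List.head?_cons, Option.some_inj] at hh
    exact hst hh.symm
  have hql := List.getLast?_eq_getLast_of_ne_nil hqne
  simp only [List.Chain', List.isChain_append] at hch
  rw [List.nodup_append'] at hnd
  refine ⟨q, q.getLast hqne, rfl, hql,
    hch.2.2 _ (Option.mem_def.mpr hql) t (Option.mem_def.mpr rfl),
    ⟨⟨hqne, ?_, hql, hch.1⟩, hnd.1⟩,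
    fun htq => hnd.2.2 htq (List.mem_singleton.mpr rfl)⟩
  cases q with
  | nil => exact absurd rfl hqne
  | cons a l =>
    rw [List.cons_append, List.head?_cons, Option.some_inj] at hh
    rw [List.head?_cons, hh]

lemma first_arc' {E : Set (V × V)} {p : List V} {s t : V}
    (h : IsDiwalk E p s t) (hst : s ≠ t) : ∃ w, (s, w) ∈ E := by
  obtain ⟨hne, hh, hl, hch⟩ := h
  cases p with
  | nil => exact absurd rfl hne
  | cons a l =>
    simp only [List.head?_cons, Option.some_inj] at hh
    subst hh
    cases l with
    | nil =>
      simp only [List.getLast?_singleton, Option.some_inj] at hl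
      exact absurd hl hst
    | cons b l' =>
      exact ⟨b, (List.isChain_cons_cons.mp hch).1⟩

lemma dipath_unique' {E : Set (V × V)}
    (hindeg : ∀ u w x : V, (u, x) ∈ E → (w, x) ∈ E → u = w) :
    ∀ (n : ℕ) (p q : List V) (s t : V), p.length ≤ n →
      IsDipath E p s t → IsDipath E q s t → p = q := by
  intro n
  induction n with
  | zero =>
    intro p q s t hlen hp _
    exfalso
    have := hp.1.1
    cases p with
    | nil => exact this rfl
    | cons a l => simp at hlen
  | succ n ih =>
    intro p q s t hlen hp hq
    by_cases hst : s = t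
    · subst hst
      rw [dipath_eq_singleton' hp, dipath_eq_singleton' hq]
    · obtain ⟨p', u, rfl, hpl, hpE, hp', _⟩ := dipath_decomp' hp hst
      obtain ⟨q', u', rfl, hql, hqE, hq', _⟩ := dipath_decomp' hq hst
      have huu : u = u' := hindeg u u' t hpE hqE
      subst huu
      have hlen' : p'.length ≤ n := by
        rw [List.length_append, List.length_singleton] at hlen
        omega
      rw [ih p' q' s u hlen' hp' hq']

lemma chain'_adj_of_dipath' {E : Set (V × V)} :
    ∀ {l : List V}, l.Nodup → l.Chain' (fun u w => (u, w) ∈ E) →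
      l.Chain' (undirected E).Adj := by
  intro l
  induction l with
  | nil => intro _ _; exact List.isChain_nil
  | cons a l ih =>
    cases l with
    | nil => intro _ _; exact List.isChain_singleton _
    | cons b l' =>
      intro hnd hch
      simp only [List.Chain', List.isChain_cons_cons] at hch ⊢
      refine ⟨⟨?_, Or.inl hch.1⟩, ih (List.nodup_cons.mp hnd).2 hch.2⟩
      intro hab
      exact (List.nodup_cons.mp hnd).1 (hab ▸ List.mem_cons_self)

lemma exists_walk' {G : SimpleGraph V} :
    ∀ (p : List V), p.Chain' G.Adj → ∀ {s t : V}, p.head? = some s → p.getLast? = some t →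
      ∃ w : G.Walk s t, w.support = p := by
  intro p
  induction p with
  | nil => intro _ s t hh _; simp at hh
  | cons a l ih =>
    intro hch s t hh hl
    simp only [List.head?_cons, Option.some_inj] at hh
    subst hh
    cases l with
    | nil =>
      simp only [List.getLast?_singleton, Option.some_inj] at hl
      subst hl
      exact ⟨SimpleGraph.Walk.nil, rfl⟩
    | cons b l' =>
      simp only [List.Chain', List.isChain_cons_cons] at hch
      rw [List.getLast?_cons_cons] at hl
      obtain ⟨w, hw⟩ := ih hch.2 rfl hl
      exact ⟨SimpleGraph.Walk.cons hch.1 w, by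
        rw [SimpleGraph.Walk.support_cons, hw]⟩

lemma dipath_subset_connected' {A : Set (V × V)} (htree : (undirected A).IsTree)
    {X : Set V} (hXconn : (SimpleGraph.induce X (undirected A)).Connected)
    {p : List V} {s t : V} (hp : IsDipath A p s t) (hs : s ∈ X) (ht : t ∈ X) :
    ∀ x ∈ p, x ∈ X := by
  obtain ⟨⟨hne, hh, hl, hch⟩, hnd⟩ := hp
  obtain ⟨w, hw⟩ := exists_walk' p (chain'_adj_of_dipath' hnd hch) hh hl
  have hwpath : w.IsPath := by
    rw [SimpleGraph.Walk.isPath_def, hw]; exact hnd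
  obtain ⟨w'⟩ := hXconn.preconnected ⟨s, hs⟩ ⟨t, ht⟩
  let f := (SimpleGraph.Embedding.induce (G := undirected A) X).toHom
  have hsupmap : ∀ x ∈ (w'.map f).support, x ∈ X := by
    intro x hx
    rw [SimpleGraph.Walk.support_map] at hx
    obtain ⟨y, _, rfl⟩ := List.mem_map.mp hx
    exact y.2
  let w2 : (undirected A).Walk s t := (w'.map f).copy rfl rfl
  have hsup2 : ∀ x ∈ w2.support, x ∈ X := by
    intro x hx
    simp only [w2, SimpleGraph.Walk.support_copy] at hx
    exact hsupmap x hx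
  have heq : w = w2.bypass :=
    (htree.existsUnique_path s t).unique hwpath w2.bypass_isPath
  intro x hx
  rw [← hw] at hx
  rw [heq] at hx
  exact hsup2 x (w2.support_bypass_subset hx)

end ContractionHelpers

/-- In the contraction setup with `|T(v)| ≤ T`, for connected
`X ⊆ N` and a commodity `k` with `s_k ∈ X`, `t'_k ∈ V(B_v)` and `t'_k ∉ X`, either
`δ⁺_{P_k}(X) = δ⁺_{Q_k}(X)` or `δ⁺_{Q_k}(X) = {(p(v), t'_k)}`. -/
theorem cut_eq_or_cut_eq_parent_arc [Fintype V] [DecidableEq V]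
    (A : Set (V × V)) (K : Finset (V × V)) (P : V × V → List V)
    (hI : IsTreeInstance A K P)
    -- `D` is an out-tree rooted at `r`
    (r : V) (hrin : ∀ u, (u, r) ∉ A) (hrreach : ∀ x, reaches A r x)
    (hindeg : ∀ u w x : V, (u, x) ∈ A → (w, x) ∈ A → u = w)
    -- the target
    (T : ℕ) (hT : 1 ≤ T)
    -- the contracted node: a non-root non-leaf all of whose out-neighbors are leaves
    (v : V) (hvr : v ≠ r) (hvnonleaf : ∃ w, (v, w) ∈ A)
    (hvchildren : ∀ w, (v, w) ∈ A → ∀ x, (w, x) ∉ A)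
    -- the parent of `v`
    (pv : V) (hpv : (pv, v) ∈ A)
    -- the blocking sources: nearest sources to the tail among `S(a)`
    (b : V × V → V)
    (hb : ∀ a ∈ outArcsAt A v, b a ∈ SrcsOf K P a ∧
      ∀ x ∈ SrcsOf K P a, reaches A x (b a))
    -- the partition `δ⁺_D(v) = Av ∪ Bv` with `|Av| = min T |δ⁺_D(v)|`, such that for
    -- `a ∈ Av`, `a' ∈ Bv`, `b a` lies on the directed path from `b a'` to `v`
    (Av Bv : Set (V × V))
    (hunion : Av ∪ Bv = outArcsAt A v) (hABdisj : Disjoint Av Bv)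
    (hAvcard : Av.ncard = min T (outArcsAt A v).ncard)
    (hblock : ∀ a ∈ Av, ∀ a' ∈ Bv, reaches A (b a') (b a) ∧ reaches A (b a) v)
    -- `|T(v)| ≤ T`
    (hTv : {t : V | (v, t) ∈ K}.ncard ≤ T)
    -- the node set `X` inducing a connected subgraph of `D`
    (X : Set V)
    (hXconn : (SimpleGraph.induce X (undirected A)).Connected)
    -- the commodity `k` with `s_k ∈ X`, `t'_k ∈ V(B_v)` and `t'_k ∉ X`
    (k : V × V) (hk : k ∈ K) (hsX : k.1 ∈ X)
    (ht'B : tPrime Av v k ∈ Prod.snd '' Bv) (ht'X : tPrime Av v k ∉ X)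
    -- `Q_k`: the unique directed `s_k,t'_k`-path in `D^T_v`
    (Q : List V) (hQ : IsDipath (contractArcs A v pv Bv) Q k.1 (tPrime Av v k)) :
    cut (listArcs (P k)) X = cut (listArcs Q) X ∨
      cut (listArcs Q) X = {((pv, tPrime Av v k) : V × V)} := by

  classical
  obtain ⟨hKne, hnetriv, htree, hP⟩ := hI
  have hvv : (v, v) ∉ A := fun h => hvchildren v h v h
  have hpvv : pv ≠ v := fun h => hvv (h ▸ hpv)
  have hBout : Bv ⊆ outArcsAt A v := by
    rw [← hunion]; exact Set.subset_union_right
  obtain ⟨a, haB, hat⟩ := ht'B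
  have havt : (v, tPrime Av v k) ∈ Bv := by
    have h1 : a.1 = v := (hBout haB).2
    rw [← hat, ← h1]; exact haB
  have hvtA : (v, tPrime Av v k) ∈ A := (hBout havt).1
  have htpv : tPrime Av v k ≠ v := by
    intro h
    rw [h] at hvtA
    exact hvv hvtA
  have htp : tPrime Av v k = k.2 := by
    have hmem : ¬ (k.2 ∈ Prod.snd '' Av) := by
      intro hmem
      exact htpv (by simp [tPrime, hmem])
    simp [tPrime, hmem]
  rw [htp] at hvtA havt ht'X hQ ⊢
  have hst : k.1 ≠ k.2 := hnetriv k hk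
  have hleaf : ∀ x, (k.2, x) ∉ A := hvchildren _ hvtA
  -- decompose Q
  obtain ⟨Q0, u', hQeq, hQ0l, hu'E, hQ0, htQ0⟩ := dipath_decomp' hQ hst
  have hu' : u' = pv := by
    rcases hu'E with h | ⟨w, hwB, hw⟩
    · exfalso
      have huv : u' = v := hindeg u' v k.2 h.1 hvtA
      exact h.2 ⟨h.1, huv⟩
    · exact congrArg Prod.fst hw
  rw [hu'] at hQ0l hQ0
  -- k.1 ≠ v
  have hsv : k.1 ≠ v := by
    intro h
    have hne2 : k.1 ≠ pv := by rw [h]; exact hpvv.symm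
    obtain ⟨w0, hw0⟩ := first_arc' hQ0.1 hne2
    rcases hw0 with h0 | ⟨w, hwB, hw⟩
    · exact h0.2 ⟨h0.1, h⟩
    · exact hpvv ((congrArg Prod.fst hw).symm.trans h)
  -- arcs of Q0 lie in A
  have hQ0A : listArcs Q0 ⊆ A := by
    intro c hc
    have hcC : c ∈ contractArcs A v pv Bv := listArcs_subset' hQ0.1.2.2.2 hc
    rcases hcC with h | ⟨w, hwB, hw⟩
    · exact h.1
    · exfalso
      have hwA : (v, w) ∈ A := (hBout hwB).1
      have hwleaf := hvchildren w hwA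
      have hwpv : w ≠ pv := fun h0 => hwleaf v (h0 ▸ hpv)
      have hwQ0 : w ∈ Q0 := by
        have h2 := (mem_of_mem_listArcs' hc).2
        rw [hw] at h2
        exact h2
      obtain ⟨z, hz⟩ := exists_succ_of_mem' hQ0l hwQ0 hwpv
      have hzC : (w, z) ∈ contractArcs A v pv Bv := listArcs_subset' hQ0.1.2.2.2 hz
      rcases hzC with h2 | ⟨w2, _, hw2⟩
      · exact hwleaf z h2.1
      · exact hwpv (congrArg Prod.fst hw2)
  have hQ0A' : IsDipath A Q0 k.1 pv :=
    ⟨⟨hQ0.1.1, hQ0.1.2.1, hQ0.1.2.2.1, chain'_of_listArcs' hQ0A⟩, hQ0.2⟩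
  -- decompose P
  have hPk := hP k hk
  obtain ⟨R0, u0, hPeq, hR0l, hu0E, hR0, htR0⟩ := dipath_decomp' hPk hst
  have hu0 : u0 = v := hindeg u0 v k.2 hu0E hvtA
  rw [hu0] at hR0l hR0
  obtain ⟨R1, u1, hR0eq, hR1l, hu1E, hR1, hvR1⟩ := dipath_decomp' hR0 hsv
  have hu1 : u1 = pv := hindeg u1 pv v hu1E hpv
  rw [hu1] at hR1l hR1
  -- uniqueness of dipaths
  have hRQ : R1 = Q0 := dipath_unique' hindeg R1.length R1 Q0 k.1 pv le_rfl hR1 hQ0A'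
  -- arcs of P and Q
  have hPar : listArcs (P k) = insert (v, k.2) (insert (pv, v) (listArcs R1)) := by
    rw [hPeq, hR0eq, listArcs_append_last' (List.getLast?_concat (l := R1)),
      listArcs_append_last' hR1l]
  have hQar : listArcs Q = insert (pv, k.2) (listArcs R1) := by
    rw [hQeq, listArcs_append_last' hQ0l, hRQ]
  by_cases hpvX : pv ∈ X
  · right
    have hR1X : ∀ x ∈ R1, x ∈ X :=
      dipath_subset_connected' htree hXconn hR1 hsX hpvX
    ext c
    simp only [cut, Set.mem_setOf_eq, Set.mem_singleton_iff, hQar]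
    constructor
    · rintro ⟨hcmem, hc1, hc2⟩
      rcases Set.mem_insert_iff.mp hcmem with rfl | hcR
      · rfl
      · exact absurd (hR1X _ (mem_of_mem_listArcs' hcR).2) hc2
    · rintro rfl
      exact ⟨Set.mem_insert _ _, hpvX, ht'X⟩
  · left
    have hvX : v ∉ X := by
      intro hvX
      have hall := dipath_subset_connected' htree hXconn hR0 hsX hvX
      have hpvR0 : pv ∈ R0 := by
        rw [hR0eq]
        exact List.mem_append_left _ (mem_of_getLast?' hR1l)
      exact hpvX (hall pv hpvR0)
    ext c
    simp only [cut, Set.mem_setOf_eq, hPar, hQar]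
    constructor
    · rintro ⟨hcmem, hc1, hc2⟩
      rcases Set.mem_insert_iff.mp hcmem with rfl | hcmem
      · exact absurd hc1 hvX
      · rcases Set.mem_insert_iff.mp hcmem with rfl | hcmem
        · exact absurd hc1 hpvX
        · exact ⟨Set.mem_insert_of_mem _ hcmem, hc1, hc2⟩
    · rintro ⟨hcmem, hc1, hc2⟩
      rcases Set.mem_insert_iff.mp hcmem with rfl | hcmem
      · exact absurd hc1 hpvX
      · exact ⟨Set.mem_insert_of_mem _ (Set.mem_insert_of_mem _ hcmem), hc1, hc2⟩
end

section
/- Let I = (D, K) be a feasible star instance. Then the subgraph H := {(s_k, t_k) : k ∈ K} of cl(D) is feasible, and Δ⁺(H) ≤ 2·Δ*. -/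
open scoped Classical

variable {V : Type*}

lemma listArcs_cons_subset (a : V) (p : List V) : listArcs p ⊆ listArcs (a :: p) := by
  intro x hx
  cases p with
  | nil => simp [listArcs] at hx
  | cons b r =>
    simp only [listArcs, Set.mem_setOf_eq, List.tail_cons, List.zip_cons_cons,
      List.mem_cons] at *
    exact Or.inr hx

lemma chain'_listArcs : ∀ (p : List V), p.Chain' (fun u w => (u, w) ∈ listArcs p)
  | [] => List.isChain_nil
  | [_] => List.isChain_singleton _
  | a :: b :: r => by
    rw [List.Chain', List.isChain_cons_cons]
    constructor
    · simp [listArcs]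
    · exact (chain'_listArcs (b :: r)).imp
        (fun u w h => listArcs_cons_subset a _ h)

lemma reflTransGen_of_walk {R : V → V → Prop} :
    ∀ {p : List V} {s t : V}, p.head? = some s → p.getLast? = some t →
      p.Chain' R → Relation.ReflTransGen R s t := by
  intro p
  induction p with
  | nil => intro s t hs; simp at hs
  | cons a q ih =>
    intro s t hs ht hc
    simp only [List.head?_cons, Option.some.injEq] at hs
    subst hs
    cases q with
    | nil =>
      simp only [List.getLast?_singleton, Option.some.injEq] at ht
      subst ht; exact Relation.ReflTransGen.refl
    | cons b r =>
      rw [List.Chain', List.isChain_cons_cons] at hc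
      rw [List.getLast?_cons_cons] at ht
      exact Relation.ReflTransGen.head hc.1 (ih rfl ht hc.2)

lemma walk_mem_cl {E : Set (V × V)} {p : List V} {s t : V}
    (h : IsDiwalk E p s t) (hst : s ≠ t) : (s, t) ∈ cl E :=
  ⟨hst, reflTransGen_of_walk h.2.1 h.2.2.1 h.2.2.2⟩

lemma walk_mem_cl_listArcs {E : Set (V × V)} {p : List V} {s t : V}
    (h : IsDiwalk E p s t) (hst : s ≠ t) : (s, t) ∈ cl (listArcs p) :=
  ⟨hst, reflTransGen_of_walk h.2.1 h.2.2.1 (chain'_listArcs p)⟩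

lemma cl_single_subset {v t : V} (hvt : v ≠ t) :
    cl ({(v, t)} : Set (V × V)) ⊆ {(v, t)} := by
  have key : ∀ a b : V,
      Relation.ReflTransGen (fun u w => (u, w) ∈ ({(v, t)} : Set (V × V))) a b →
      a = b ∨ (a = v ∧ b = t) := by
    intro a b h
    induction h with
    | refl => exact Or.inl rfl
    | tail _ h2 ih =>
      simp only [Set.mem_singleton_iff, Prod.mk.injEq] at h2
      obtain ⟨hc1, hc2⟩ := h2
      rcases ih with rfl | ⟨rfl, rfl⟩
      · exact Or.inr ⟨hc1, hc2⟩
      · exact absurd hc1.symm hvt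
  rintro ⟨a, b⟩ ⟨hab, hr⟩
  rcases key a b hr with rfl | ⟨rfl, rfl⟩
  · exact absurd rfl hab
  · rfl

lemma cl_pair_subset {v c t : V} (hvc : v ≠ c) (hct : c ≠ t) (hvt : v ≠ t) :
    cl ({(v, c), (c, t)} : Set (V × V)) ⊆ {(v, c), (c, t), (v, t)} := by
  have key : ∀ a b : V,
      Relation.ReflTransGen
        (fun u w => (u, w) ∈ ({(v, c), (c, t)} : Set (V × V))) a b →
      a = b ∨ (a = v ∧ b = c) ∨ (a = c ∧ b = t) ∨ (a = v ∧ b = t) := by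
    intro a b h
    induction h with
    | refl => exact Or.inl rfl
    | tail _ h2 ih =>
      simp only [Set.mem_insert_iff, Set.mem_singleton_iff, Prod.mk.injEq] at h2
      rcases h2 with ⟨hm, hb⟩ | ⟨hm, hb⟩
      · rcases ih with heq | ⟨ha, hm2⟩ | ⟨ha, hm2⟩ | ⟨ha, hm2⟩
        · exact Or.inr (Or.inl ⟨heq.trans hm, hb⟩)
        · exact absurd (hm2.symm.trans hm) (Ne.symm hvc)
        · exact absurd (hm2.symm.trans hm) (Ne.symm hvt)
        · exact absurd (hm2.symm.trans hm) (Ne.symm hvt)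
      · rcases ih with heq | ⟨ha, hm2⟩ | ⟨ha, hm2⟩ | ⟨ha, hm2⟩
        · exact Or.inr (Or.inr (Or.inl ⟨heq.trans hm, hb⟩))
        · exact Or.inr (Or.inr (Or.inr ⟨ha, hb⟩))
        · exact absurd (hm2.symm.trans hm) (Ne.symm hct)
        · exact absurd (hm2.symm.trans hm) (Ne.symm hct)
  rintro ⟨a, b⟩ ⟨hab, hr⟩
  rcases key a b hr with rfl | ⟨rfl, rfl⟩ | ⟨rfl, rfl⟩ | ⟨rfl, rfl⟩
  · exact absurd rfl hab
  · exact Or.inl rfl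
  · exact Or.inr (Or.inl rfl)
  · exact Or.inr (Or.inr rfl)

lemma star_path_shape {A : Set (V × V)} {c v t : V}
    (hstar : ∀ a ∈ A, (a.1 = c ∧ a.2 ≠ c) ∨ (a.2 = c ∧ a.1 ≠ c))
    {p : List V} (h : IsDipath A p v t) (hvt : v ≠ t) :
    p = [v, t] ∨ (v ≠ c ∧ t ≠ c ∧ p = [v, c, t]) := by
  obtain ⟨⟨hne, hhd, hlast, hch⟩, hnd⟩ := h
  match p with
  | [] => exact absurd rfl hne
  | [a] =>
    simp only [List.head?_cons, Option.some.injEq] at hhd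
    simp only [List.getLast?_singleton, Option.some.injEq] at hlast
    exact absurd (hhd.symm.trans hlast) hvt
  | [a, b] =>
    simp only [List.head?_cons, Option.some.injEq] at hhd
    have : [a, b].getLast? = some b := rfl
    rw [this, Option.some.injEq] at hlast
    subst hhd; subst hlast
    exact Or.inl rfl
  | [a, b, d] =>
    simp only [List.head?_cons, Option.some.injEq] at hhd
    have : [a, b, d].getLast? = some d := rfl
    rw [this, Option.some.injEq] at hlast
    subst hhd; subst hlast
    rw [List.Chain', List.isChain_cons_cons, List.isChain_cons_cons] at hch
    obtain ⟨h1, h2, -⟩ := hch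
    have had : a ≠ d := by
      rintro rfl
      exact (List.nodup_cons.mp hnd).1 (by simp)
    have hab : a ≠ b := by
      rintro rfl
      exact (List.nodup_cons.mp hnd).1 (by simp)
    have hbd : b ≠ d := by
      rintro rfl
      exact (List.nodup_cons.mp (List.nodup_cons.mp hnd).2).1 (by simp)
    have hb : b = c := by
      by_contra hbc
      have ha : a = c := by
        rcases hstar _ h1 with ⟨ha, _⟩ | ⟨hb, _⟩
        · exact ha
        · exact absurd hb hbc
      have hd : d = c := by
        rcases hstar _ h2 with ⟨hb, _⟩ | ⟨hd, _⟩
        · exact absurd hb hbc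
        · exact hd
      exact had (ha.trans hd.symm)
    subst hb
    exact Or.inr ⟨hab, fun ht => hbd ht.symm, rfl⟩
  | a :: b :: d :: e :: r =>
    rw [List.Chain', List.isChain_cons_cons, List.isChain_cons_cons, List.isChain_cons_cons] at hch
    obtain ⟨h1, h2, h3, -⟩ := hch
    have had : a ≠ d := by
      rintro rfl
      exact (List.nodup_cons.mp hnd).1 (by simp)
    have hbd : b ≠ d := by
      rintro rfl
      exact (List.nodup_cons.mp (List.nodup_cons.mp hnd).2).1 (by simp)
    have hbe : b ≠ e := by
      rintro rfl
      exact (List.nodup_cons.mp (List.nodup_cons.mp hnd).2).1 (by simp)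
    by_cases hbc : b = c
    · have hdc : d ≠ c := by
        rcases hstar _ h2 with ⟨_, hd⟩ | ⟨_, hb'⟩
        · exact hd
        · exact absurd hbc hb'
      rcases hstar _ h3 with ⟨hd', _⟩ | ⟨he, _⟩
      · exact absurd hd' hdc
      · exact absurd (hbc.trans he.symm) hbe
    · have ha : a = c := by
        rcases hstar _ h1 with ⟨ha, _⟩ | ⟨hb, _⟩
        · exact ha
        · exact absurd hb hbc
      have hd : d = c := by
        rcases hstar _ h2 with ⟨hb, _⟩ | ⟨hd, _⟩
        · exact absurd hb hbc
        · exact hd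
      exact absurd (ha.trans hd.symm) had

lemma dipath_first_arc {E' : Set (V × V)} {p : List V} {v t : V}
    (h : IsDipath E' p v t) (hvt : v ≠ t) :
    ∃ w q, p = v :: w :: q ∧ (v, w) ∈ E' := by
  obtain ⟨⟨hne, hhd, hlast, hch⟩, -⟩ := h
  match p with
  | [] => exact absurd rfl hne
  | [a] =>
    simp only [List.head?_cons, Option.some.injEq] at hhd
    simp only [List.getLast?_singleton, Option.some.injEq] at hlast
    exact absurd (hhd.symm.trans hlast) hvt
  | a :: b :: q =>
    simp only [List.head?_cons, Option.some.injEq] at hhd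
    subst hhd
    rw [List.Chain', List.isChain_cons_cons] at hch
    exact ⟨b, q, rfl, hch.1⟩

lemma dipath_triple {E' : Set (V × V)} {p : List V} {v c t : V}
    (hsub : E' ⊆ ({(v, c), (c, t), (v, t)} : Set (V × V)))
    (hvc : v ≠ c) (hct : c ≠ t) (hvt : v ≠ t)
    (h : IsDipath E' p v t) : (v, t) ∈ E' ∨ (c, t) ∈ E' := by
  obtain ⟨w, q, hpe, harc⟩ := dipath_first_arc h hvt
  have h' := hsub harc
  simp only [Set.mem_insert_iff, Set.mem_singleton_iff, Prod.mk.injEq] at h'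
  rcases h' with ⟨-, rfl⟩ | ⟨hvc', -⟩ | ⟨-, rfl⟩
  · -- first arc is (v, c); there must be a second arc
    obtain ⟨⟨-, -, hlast, hch⟩, -⟩ := h
    rw [hpe] at hlast hch
    match q, hlast, hch with
    | [], hlast, _ =>
      have : w = t := by
        have : [v, w].getLast? = some w := rfl
        rw [this, Option.some.injEq] at hlast
        exact hlast
      exact absurd this hct
    | x :: q', _, hch =>
      rw [List.Chain', List.isChain_cons_cons, List.isChain_cons_cons] at hch
      have harc2 : (w, x) ∈ E' := hch.2.1
      have h2 := hsub harc2
      simp only [Set.mem_insert_iff, Set.mem_singleton_iff, Prod.mk.injEq] at h2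
      rcases h2 with ⟨hcv, -⟩ | ⟨-, rfl⟩ | ⟨hcv, -⟩
      · exact absurd hcv.symm hvc
      · exact Or.inr harc2
      · exact absurd hcv.symm hvc
  · exact absurd hvc' hvc
  · exact Or.inl harc

/-- In a feasible star instance, the subgraph
`H = {(s_k, t_k) : k ∈ K}` is feasible and `Δ⁺(H) ≤ 2·Δ*`. -/
theorem star_direct_routing_two_approx [Fintype V] [DecidableEq V]
    (A : Set (V × V)) (K : Finset (V × V)) (P : V × V → List V)
    (hI : IsTreeInstance A K P)
    -- the underlying tree is a star with center `c`
    (c : V) (hstar : ∀ a ∈ A, (a.1 = c ∧ a.2 ≠ c) ∨ (a.2 = c ∧ a.1 ≠ c))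
    -- the instance is feasible
    (hfeas : ∃ H, Feasible A K P H) :
    Feasible A K P (↑K : Set (V × V)) ∧
      maxOutDeg (↑K : Set (V × V)) ≤ 2 * DeltaStar A K P := by
  obtain ⟨hKne, hne, htree, hpath⟩ := hI
  have hfeasK : Feasible A K P (↑K : Set (V × V)) := by
    constructor
    · intro k hk
      have hk' : k ∈ K := hk
      have h1 := walk_mem_cl (hpath k hk').1 (hne k hk')
      exact h1
    · intro k hk
      refine ⟨[k.1, k.2], ⟨⟨by simp, rfl, rfl, ?_⟩, ?_⟩⟩
      · rw [List.Chain', List.isChain_cons_cons]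
        refine ⟨⟨hk, walk_mem_cl_listArcs (hpath k hk).1 (hne k hk)⟩,
          List.isChain_singleton _⟩
      · simp [List.nodup_cons, hne k hk]
  refine ⟨hfeasK, ?_⟩
  have hS : {d | ∃ H, Feasible A K P H ∧ maxOutDeg H = d}.Nonempty := by
    obtain ⟨H, hH⟩ := hfeas
    exact ⟨maxOutDeg H, H, hH, rfl⟩
  obtain ⟨H₀, hH₀, hEq⟩ := Nat.sInf_mem hS
  have key : ∀ k ∈ K, (k.1, k.2) ∈ H₀ ∨ (c, k.2) ∈ H₀ := by
    intro k hk
    obtain ⟨p, hp⟩ := hH₀.2 k hk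
    have hkne := hne k hk
    rcases star_path_shape hstar (hpath k hk) hkne with hPk | ⟨hvc, htc, hPk⟩
    · obtain ⟨w, q, -, harc⟩ := dipath_first_arc hp hkne
      have hmem : (k.1, w) ∈ cl (listArcs (P k)) := harc.2
      rw [hPk] at hmem
      have hla : listArcs [k.1, k.2] = {(k.1, k.2)} := by
        ext x; simp [listArcs]
      rw [hla] at hmem
      have := cl_single_subset hkne hmem
      simp only [Set.mem_singleton_iff, Prod.mk.injEq] at this
      rw [← this.2]
      exact Or.inl harc.1
    · have hla : listArcs [k.1, c, k.2] = {(k.1, c), (c, k.2)} := by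
        ext x; simp [listArcs]
      have hsub : H₀ ∩ cl (listArcs (P k)) ⊆
          ({(k.1, c), (c, k.2), (k.1, k.2)} : Set (V × V)) := by
        intro x hx
        have := hx.2
        rw [hPk, hla] at this
        exact cl_pair_subset hvc (fun h => htc h.symm) hkne this
      rcases dipath_triple hsub hvc (fun h => htc h.symm) hkne hp with h | h
      · exact Or.inl h.1
      · exact Or.inr h.1
  have hdeg : ∀ v, outDeg (↑K : Set (V × V)) v ≤ 2 * DeltaStar A K P := by
    intro v
    have hsub : {w | (v, w) ∈ (↑K : Set (V × V))} ⊆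
        {w | (v, w) ∈ H₀} ∪ {w | (c, w) ∈ H₀} := by
      intro w hw
      rcases key (v, w) hw with h | h
      · exact Or.inl h
      · exact Or.inr h
    calc outDeg (↑K : Set (V × V)) v
        ≤ ({w | (v, w) ∈ H₀} ∪ {w | (c, w) ∈ H₀}).ncard :=
          Set.ncard_le_ncard hsub (Set.toFinite _)
      _ ≤ outDeg H₀ v + outDeg H₀ c := Set.ncard_union_le _ _
      _ ≤ maxOutDeg H₀ + maxOutDeg H₀ :=
          add_le_add (Finset.le_sup (Finset.mem_univ v))
            (Finset.le_sup (Finset.mem_univ c))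
      _ = 2 * DeltaStar A K P := by rw [hEq]; unfold DeltaStar; ring
  exact Finset.sup_le fun v _ => hdeg v
end

section
/- For every positive integer n, the following star instance has Δ* = n: the digraph D has a center node v, sinks t_1, …, t_{2n}, and one source s_T for each n-element subset T of {1, …, 2n}; its arcs are (s_T, v) for each such T and (v, t_i) for each i ∈ {1, …, 2n}; and the commodity set is K = {(s_T, t_i) : T an n-element subset of {1,…,2n}, i ∈ T}. That is, the subgraph {(s_k, t_k) : k ∈ K} is feasible with maximum out-degree n, and every feasible subgraph of cl(D) has maximum out-degree at least n. -/
open scoped Classical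

variable {V : Type*}

/-- The node type of the hard star instance: one source per `n`-element subset of
`{1, …, 2n}`, `2n` sinks, and a center. -/
abbrev StarNode (n : ℕ) :=
  ({T : Finset (Fin (2 * n)) // T.card = n} ⊕ Fin (2 * n)) ⊕ Unit

/-- The center node. -/
def center (n : ℕ) : StarNode n := Sum.inr ()

/-- The source node indexed by an `n`-element subset `T` of `{1, …, 2n}`. -/
def src {n : ℕ} (T : {T : Finset (Fin (2 * n)) // T.card = n}) : StarNode n :=
  Sum.inl (Sum.inl T)

/-- The sink node `t_i`. -/
def snk {n : ℕ} (i : Fin (2 * n)) : StarNode n := Sum.inl (Sum.inr i)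

/-- The arcs of the hard star instance: `(s_T, v)` for each `n`-element subset `T`,
and `(v, t_i)` for each `i`. -/
def starArcs (n : ℕ) : Set (StarNode n × StarNode n) :=
  {a | (∃ T, a = (src T, center n)) ∨ ∃ i, a = (center n, snk i)}

/-- The commodity set: `(s_T, t_i)` for every `n`-element subset `T` and `i ∈ T`. -/
noncomputable def starK (n : ℕ) : Finset (StarNode n × StarNode n) :=
  Finset.univ.filter fun a =>
    ∃ (T : {T : Finset (Fin (2 * n)) // T.card = n}) (i : Fin (2 * n)),
      i ∈ T.1 ∧ a = (src T, snk i)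

/-- The designated paths: each commodity is routed `s_k, v, t_k` through the center. -/
def starP (n : ℕ) : StarNode n × StarNode n → List (StarNode n) :=
  fun k => [k.1, center n, k.2]

section Aux

lemma listArcs_triple (a c b : V) : listArcs [a, c, b] = {(a, c), (c, b)} := by
  ext x
  simp [listArcs]

lemma cl_three {a c b : V} (hac : a ≠ c) (hab : a ≠ b) (hcb : c ≠ b) :
    cl ({(a, c), (c, b)} : Set (V × V)) ⊆ {(a, c), (a, b), (c, b)} := by
  rintro ⟨x, y⟩ ⟨hxy, hr⟩
  have key : ∀ y', Relation.ReflTransGen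
      (fun u w => (u, w) ∈ ({(a, c), (c, b)} : Set (V × V))) x y' →
      x = y' ∨ (x, y') ∈ ({(a, c), (a, b), (c, b)} : Set (V × V)) := by
    intro y' h
    induction h with
    | refl => exact Or.inl rfl
    | @tail m y' hxm hstep ih =>
      simp only [Set.mem_insert_iff, Set.mem_singleton_iff, Prod.mk.injEq] at hstep ⊢
      rcases ih with rfl | ih
      · rcases hstep with ⟨rfl, rfl⟩ | ⟨rfl, rfl⟩
        · exact Or.inr (Or.inl ⟨rfl, rfl⟩)
        · exact Or.inr (Or.inr (Or.inr ⟨rfl, rfl⟩))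
      · simp only [Set.mem_insert_iff, Set.mem_singleton_iff, Prod.mk.injEq] at ih
        rcases ih with ⟨rfl, rfl⟩ | ⟨rfl, rfl⟩ | ⟨rfl, rfl⟩
        · rcases hstep with ⟨h1, rfl⟩ | ⟨_, rfl⟩
          · exact absurd h1.symm hac
          · exact Or.inr (Or.inr (Or.inl ⟨rfl, rfl⟩))
        · rcases hstep with ⟨h1, rfl⟩ | ⟨h1, rfl⟩
          · exact absurd h1.symm hab
          · exact absurd h1.symm hcb
        · rcases hstep with ⟨h1, rfl⟩ | ⟨h1, rfl⟩
          · exact absurd h1.symm hab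
          · exact absurd h1.symm hcb
  rcases key y hr with rfl | h
  · exact absurd rfl hxy
  · exact h

/-- Any directed walk from `a` to `b` using only the three arcs `(a,c),(a,b),(c,b)`
either uses the arc `(a,b)` or uses both `(a,c)` and `(c,b)`. -/
lemma diwalk_cases {E : Set (V × V)} {a c b : V}
    (hac : a ≠ c) (hab : a ≠ b) (hcb : c ≠ b)
    (hE : E ⊆ {(a, c), (a, b), (c, b)})
    {p : List V} (hp : IsDiwalk E p a b) :
    (a, b) ∈ E ∨ ((a, c) ∈ E ∧ (c, b) ∈ E) := by
  obtain ⟨hne, hhead, hlast, hchain⟩ := hp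
  match p, hhead with
  | x :: q, hhead =>
    have hx : a = x := (show x = a by simpa using hhead).symm
    subst hx
    match q, hlast, hchain with
    | [], hlast, _ =>
      have : a = b := by simpa using hlast
      exact absurd this hab
    | y :: r, hlast, hchain =>
      have h1 : (a, y) ∈ E := (List.isChain_cons_cons.mp hchain).1
      have hchain2 := (List.isChain_cons_cons.mp hchain).2
      have hy := hE h1
      simp only [Set.mem_insert_iff, Set.mem_singleton_iff, Prod.mk.injEq] at hy
      rcases hy with ⟨_, hy2⟩ | ⟨_, hy2⟩ | ⟨h, _⟩
      · -- y = c
        obtain rfl : c = y := hy2.symm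
        refine Or.inr ⟨h1, ?_⟩
        match r, hlast, hchain2 with
        | [], hlast, _ =>
          have : c = b := by simpa using hlast
          exact absurd this hcb
        | z :: r', _, hchain2 =>
          have h2 : (c, z) ∈ E := (List.isChain_cons_cons.mp hchain2).1
          have hz := hE h2
          simp only [Set.mem_insert_iff, Set.mem_singleton_iff, Prod.mk.injEq] at hz
          rcases hz with ⟨h3, _⟩ | ⟨h3, _⟩ | ⟨_, hz2⟩
          · exact absurd h3.symm hac
          · exact absurd h3.symm hac
          · obtain rfl : b = z := hz2.symm
            exact h2
      · obtain rfl : b = y := hy2.symm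
        exact Or.inl h1
      · exact absurd h hac

end Aux

section Star

lemma src_ne_center {n : ℕ} (T : {T : Finset (Fin (2 * n)) // T.card = n}) :
    src T ≠ center n := by simp [src, center]

lemma center_ne_snk {n : ℕ} (i : Fin (2 * n)) : center n ≠ snk i := by
  simp [snk, center]

lemma src_ne_snk {n : ℕ} (T : {T : Finset (Fin (2 * n)) // T.card = n})
    (i : Fin (2 * n)) : src T ≠ snk i := by simp [src, snk]

lemma snk_injective {n : ℕ} : Function.Injective (snk (n := n)) := by
  intro i j h
  simpa [snk] using h

lemma mem_starK {n : ℕ} {k : StarNode n × StarNode n} :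
    k ∈ starK n ↔ ∃ (T : {T : Finset (Fin (2 * n)) // T.card = n})
      (i : Fin (2 * n)), i ∈ T.1 ∧ k = (src T, snk i) := by
  simp [starK]

/-- The direct arc `(s_T, t_i)` is in the closure of the designated path. -/
lemma direct_mem_cl_path {n : ℕ} (T : {T : Finset (Fin (2 * n)) // T.card = n})
    (i : Fin (2 * n)) :
    (src T, snk i) ∈ cl (listArcs (starP n (src T, snk i))) := by
  have h : listArcs (starP n (src T, snk i)) =
      {(src T, center n), (center n, snk i)} := listArcs_triple _ _ _
  rw [h]
  exact ⟨src_ne_snk T i,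
    Relation.ReflTransGen.head (by left; rfl)
      (Relation.ReflTransGen.single (by right; rfl))⟩

lemma outSet_starK_src {n : ℕ} (T : {T : Finset (Fin (2 * n)) // T.card = n}) :
    {w | (src T, w) ∈ (↑(starK n) : Set (StarNode n × StarNode n))}
      = snk '' ↑T.1 := by
  ext w
  simp only [Set.mem_setOf_eq, Finset.mem_coe, mem_starK, Set.mem_image,
    Finset.mem_coe]
  constructor
  · rintro ⟨T', i, hi, heq⟩
    have h1 : src T = src T' ∧ w = snk i := by
      constructor
      · exact congrArg Prod.fst heq
      · exact congrArg Prod.snd heq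
    have hT : T = T' := by
      have := h1.1
      simpa [src] using this
    exact ⟨i, hT ▸ hi, h1.2.symm⟩
  · rintro ⟨i, hi, rfl⟩
    exact ⟨T, i, hi, rfl⟩

lemma outDeg_starK_src {n : ℕ} (T : {T : Finset (Fin (2 * n)) // T.card = n}) :
    outDeg (↑(starK n) : Set (StarNode n × StarNode n)) (src T) = n := by
  rw [outDeg, outSet_starK_src, Set.ncard_image_of_injective _ snk_injective,
    Set.ncard_coe_finset, T.2]

lemma outDeg_starK_other {n : ℕ} (v : StarNode n)
    (hv : ∀ T : {T : Finset (Fin (2 * n)) // T.card = n}, v ≠ src T) :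
    outDeg (↑(starK n) : Set (StarNode n × StarNode n)) v = 0 := by
  rw [outDeg]
  convert Set.ncard_empty (StarNode n)
  ext w
  simp only [Set.mem_setOf_eq, Finset.mem_coe, mem_starK, Set.mem_empty_iff_false,
    iff_false]
  rintro ⟨T, i, hi, heq⟩
  exact hv T (congrArg Prod.fst heq)

lemma exists_nsubset (n : ℕ) : ∃ T : Finset (Fin (2 * n)), T.card = n := by
  obtain ⟨T, _, hT⟩ := Finset.exists_subset_card_eq
    (show n ≤ (Finset.univ : Finset (Fin (2 * n))).card by
      simp; omega)
  exact ⟨T, hT⟩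

end Star

/-- The hard star instance has `Δ* = n`: the direct-routing
subgraph `{(s_k, t_k) : k ∈ K}` is feasible with maximum out-degree `n`, and every
feasible subgraph of `cl(D)` has maximum out-degree at least `n`. -/
theorem star_gap_instance_deltaStar_eq (n : ℕ) (hn : 0 < n) :
    Feasible (starArcs n) (starK n) (starP n) (↑(starK n)) ∧
      maxOutDeg (↑(starK n) : Set (StarNode n × StarNode n)) = n ∧
      ∀ H, Feasible (starArcs n) (starK n) (starP n) H → n ≤ maxOutDeg H := by
  refine ⟨⟨?_, ?_⟩, ?_, ?_⟩
  · -- starK ⊆ cl (starArcs n)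
    rintro ⟨x, y⟩ hxy
    rw [Finset.mem_coe, mem_starK] at hxy
    obtain ⟨T, i, hi, heq⟩ := hxy
    have hx : x = src T := congrArg Prod.fst heq
    have hy : y = snk i := congrArg Prod.snd heq
    subst hx; subst hy
    exact ⟨src_ne_snk T i,
      Relation.ReflTransGen.head (Or.inl ⟨T, rfl⟩)
        (Relation.ReflTransGen.single (Or.inr ⟨i, rfl⟩))⟩
  · -- every commodity routed directly
    intro k hk
    obtain ⟨T, i, hi, heq⟩ := mem_starK.mp hk
    subst heq
    refine ⟨[src T, snk i], ⟨?_, by simp, by simp, ?_⟩, by simp [src_ne_snk]⟩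
    · simp
    · apply List.isChain_pair.mpr
      exact ⟨Finset.mem_coe.mpr (mem_starK.mpr ⟨T, i, hi, rfl⟩),
        direct_mem_cl_path T i⟩
  · -- maxOutDeg starK = n
    apply le_antisymm
    · apply Finset.sup_le
      intro v _
      rcases v with (T | i) | u
      · exact le_of_eq (outDeg_starK_src T)
      · rw [outDeg_starK_other (Sum.inl (Sum.inr i)) (by intro T h; simp [src] at h)]
        omega
      · rw [outDeg_starK_other (Sum.inr u) (by intro T h; simp [src] at h)]
        omega
    · obtain ⟨T₀, hT₀⟩ := exists_nsubset n
      calc n = outDeg (↑(starK n) : Set (StarNode n × StarNode n)) (src ⟨T₀, hT₀⟩) :=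
            (outDeg_starK_src ⟨T₀, hT₀⟩).symm
        _ ≤ _ := Finset.le_sup (Finset.mem_univ _)
  · -- lower bound
    intro H hH
    set S : Finset (Fin (2 * n)) :=
      Finset.univ.filter (fun i => (center n, snk i) ∈ H) with hSdef
    by_cases hScard : n ≤ S.card
    · -- center has out-degree ≥ n
      have hsub : snk '' ↑S ⊆ {w | (center n, w) ∈ H} := by
        rintro w ⟨i, hi, rfl⟩
        exact (Finset.mem_filter.mp hi).2
      have h1 : n ≤ outDeg H (center n) := by
        calc n ≤ S.card := hScard
          _ = (snk '' (↑S : Set (Fin (2 * n)))).ncard := by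
              rw [Set.ncard_image_of_injective _ snk_injective,
                Set.ncard_coe_finset]
          _ ≤ {w | (center n, w) ∈ H}.ncard :=
              Set.ncard_le_ncard hsub (Set.toFinite _)
      exact h1.trans (Finset.le_sup (Finset.mem_univ _))
    · push_neg at hScard
      have hc : n ≤ Sᶜ.card := by
        have h1 : Sᶜ.card = Fintype.card (Fin (2 * n)) - S.card :=
          Finset.card_compl S
        rw [Fintype.card_fin] at h1
        omega
      obtain ⟨T, hTsub, hTcard⟩ := Finset.exists_subset_card_eq hc
      set T' : {T : Finset (Fin (2 * n)) // T.card = n} := ⟨T, hTcard⟩ with hT'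
      have hall : ∀ i ∈ T, (src T', snk i) ∈ H := by
        intro i hi
        have hk : (src T', snk i) ∈ starK n := mem_starK.mpr ⟨T', i, hi, rfl⟩
        obtain ⟨p, hp, _⟩ := hH.2 _ hk
        have hEsub : H ∩ cl (listArcs (starP n (src T', snk i))) ⊆
            {(src T', center n), (src T', snk i), (center n, snk i)} := by
          intro a ha
          have h2 := ha.2
          rw [show listArcs (starP n (src T', snk i)) =
            {(src T', center n), (center n, snk i)} from listArcs_triple _ _ _] at h2
          exact cl_three (src_ne_center T') (src_ne_snk T' i) (center_ne_snk i) h2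
        rcases diwalk_cases (src_ne_center T') (src_ne_snk T' i) (center_ne_snk i)
            hEsub hp with h | ⟨_, h2⟩
        · exact h.1
        · exfalso
          have hiS : i ∈ S := Finset.mem_filter.mpr ⟨Finset.mem_univ i, h2.1⟩
          exact (Finset.mem_compl.mp (hTsub hi)) hiS
      have hsub : snk '' ↑T ⊆ {w | (src T', w) ∈ H} := by
        rintro w ⟨i, hi, rfl⟩
        exact hall i hi
      have h1 : n ≤ outDeg H (src T') := by
        calc n = T.card := hTcard.symm
          _ = (snk '' (↑T : Set (Fin (2 * n)))).ncard := by
              rw [Set.ncard_image_of_injective _ snk_injective,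
                Set.ncard_coe_finset]
          _ ≤ {w | (src T', w) ∈ H}.ncard :=
              Set.ncard_le_ncard hsub (Set.toFinite _)
      exact h1.trans (Finset.le_sup (Finset.mem_univ _))
end

section
/- Let I = (D, K) be a tree instance and let v ∈ N. Define K_v := {k ∈ K : v lies on P_k}. Then: (a) for every commodity k ∉ K_v, both s_k and t_k lie in the same connected component C of D − v and P_k is contained in C; and (b) if H_v is a feasible subgraph of cl(D) for the instance (D, K_v), and for each connected component C of D − v, H_C is a feasible subgraph of cl(C) for the instance (C, K(C)) where K(C) := {k ∈ K : s_k, t_k ∈ C}, then the union H_v ∪ ⋃_C H_C is a feasible subgraph of cl(D) for the instance (D, K). -/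
open scoped Classical

variable {V : Type*}

/-- The arc set of `D − v`: delete the node `v` and all incident arcs. -/
def delNode (A : Set (V × V)) (v : V) : Set (V × V) :=
  {a ∈ A | a.1 ≠ v ∧ a.2 ≠ v}

/-- The arc set of the connected component `c` of `D − v`. -/
def compArcs (A : Set (V × V)) (v : V)
    (c : (undirected (delNode A v)).ConnectedComponent) : Set (V × V) :=
  {a ∈ delNode A v | (undirected (delNode A v)).connectedComponentMk a.1 = c}

/-- The commodities of `K` whose endpoints both lie in the connected component `c`
of `D − v`. -/
noncomputable def compK [Fintype V] [DecidableEq V] (A : Set (V × V))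
    (K : Finset (V × V)) (v : V)
    (c : (undirected (delNode A v)).ConnectedComponent) : Finset (V × V) :=
  K.filter fun k => k.1 ≠ v ∧ k.2 ≠ v ∧
    (undirected (delNode A v)).connectedComponentMk k.1 = c ∧
    (undirected (delNode A v)).connectedComponentMk k.2 = c

lemma chain'_mono' {R S : V → V → Prop} (h : ∀ a b, R a b → S a b) :
    ∀ {p : List V}, p.Chain' R → p.Chain' S :=
  fun hp => List.IsChain.imp (fun a b => h a b) hp

lemma dipath_mono {E E' : Set (V × V)} (h : E ⊆ E') {p : List V} {s t : V}
    (hp : IsDipath E p s t) : IsDipath E' p s t :=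
  ⟨⟨hp.1.1, hp.1.2.1, hp.1.2.2.1, hp.1.2.2.2.imp fun _ _ hx => h hx⟩, hp.2⟩

lemma cl_mono {E E' : Set (V × V)} (h : E ⊆ E') : cl E ⊆ cl E' := by
  rintro ⟨a, b⟩ ⟨hne, hr⟩
  exact ⟨hne, Relation.ReflTransGen.mono (fun u w hw => h hw) _ _ hr⟩

lemma chain'_adj_of_dipath {A : Set (V × V)} {v : V} {p : List V} {s t : V}
    (hp : IsDipath A p s t) (hv : v ∉ p) :
    p.Chain' (undirected (delNode A v)).Adj := by
  obtain ⟨⟨-, -, -, hch⟩, hnd⟩ := hp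
  change List.IsChain _ _ at hch ⊢
  rw [List.isChain_iff_getElem] at hch ⊢
  intro i hi
  have h1 : p.get ⟨i, by omega⟩ ∈ p := List.get_mem _ _
  have h2 : p.get ⟨i + 1, by omega⟩ ∈ p := List.get_mem _ _
  have hne : p.get ⟨i, by omega⟩ ≠ p.get ⟨i + 1, by omega⟩ := by
    intro h
    have := (List.nodup_iff_injective_get.mp hnd) h
    simp at this
  refine ⟨hne, Or.inl ⟨hch i hi, ?_, ?_⟩⟩
  · exact fun h => hv (h ▸ h1)
  · exact fun h => hv (h ▸ h2)

lemma reachable_of_chain' {G : SimpleGraph V} :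
    ∀ (p : List V) (s : V), p.head? = some s → p.Chain' G.Adj →
      ∀ x ∈ p, G.Reachable s x := by
  intro p
  induction p with
  | nil => intro s h; simp at h
  | cons a rest ih =>
    intro s hs hc x hx
    simp only [List.head?_cons, Option.some.injEq] at hs
    subst hs
    rcases List.mem_cons.mp hx with rfl | hx
    · exact SimpleGraph.Reachable.refl _
    · match rest, hx with
      | b :: rest', hx =>
        have hadj : G.Adj a b := (List.isChain_cons_cons.mp hc).1
        exact hadj.reachable.trans (ih b rfl (List.isChain_cons_cons.mp hc).2 x hx)

/-- Decomposition at a node `v` of a tree instance: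
(a) every commodity whose path avoids `v` lies entirely (path included) in a single
connected component of `D − v`, namely that of its source; and (b) the union of a
feasible subgraph for the junction instance `(D, K_v)` with feasible subgraphs for
the component instances `(C, K(C))` is feasible for `(D, K)`. -/
theorem tree_decomposition_at_node [Fintype V] [DecidableEq V]
    (A : Set (V × V)) (K : Finset (V × V)) (P : V × V → List V)
    (hI : IsTreeInstance A K P) (v : V) :
    (∀ k ∈ K, v ∉ P k →
      ∀ x ∈ P k, x ≠ v ∧ (undirected (delNode A v)).Reachable k.1 x) ∧
    ∀ (Hv : Set (V × V))
      (HC : (undirected (delNode A v)).ConnectedComponent → Set (V × V)),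
      Feasible A (K.filter fun k => v ∈ P k) P Hv →
      (∀ c, Feasible (compArcs A v c) (compK A K v c) P (HC c)) →
      Feasible A K P (Hv ∪ ⋃ c, HC c) := by
  obtain ⟨-, -, -, hP⟩ := hI
  have parta : ∀ k ∈ K, v ∉ P k →
      ∀ x ∈ P k, x ≠ v ∧ (undirected (delNode A v)).Reachable k.1 x := by
    intro k hk hv x hx
    have hdp := hP k hk
    refine ⟨fun h => hv (h ▸ hx), ?_⟩
    exact reachable_of_chain' (P k) k.1 hdp.1.2.1 (chain'_adj_of_dipath hdp hv) x hx
  refine ⟨parta, ?_⟩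
  intro Hv HC hHv hHC
  constructor
  · rintro a (ha | ha)
    · exact hHv.1 ha
    · obtain ⟨_, ⟨c, rfl⟩, ha⟩ := ha
      exact cl_mono (fun b hb => hb.1.1) ((hHC c).1 ha)
  · intro k hk
    by_cases hv : v ∈ P k
    · obtain ⟨p, hp⟩ := hHv.2 k (Finset.mem_filter.mpr ⟨hk, hv⟩)
      exact ⟨p, dipath_mono (Set.inter_subset_inter_left _ Set.subset_union_left) hp⟩
    · have hdp := hP k hk
      have h1 : k.1 ∈ P k := by
        have := hdp.1.2.1
        cases hpk : P k with
        | nil => rw [hpk] at this; simp at this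
        | cons a l =>
          rw [hpk] at this; simp at this; simp [this]
      have h2 : k.2 ∈ P k := by
        have := hdp.1.2.2.1
        obtain ⟨h, he⟩ := List.mem_getLast?_eq_getLast this
        rw [he]; exact List.getLast_mem h
      obtain ⟨hne1, _⟩ := parta k hk hv k.1 h1
      obtain ⟨hne2, hr2⟩ := parta k hk hv k.2 h2
      refine ?_
      have hmem : k ∈ compK A K v ((undirected (delNode A v)).connectedComponentMk k.1) := by
        refine Finset.mem_filter.mpr ⟨hk, hne1, hne2, rfl, ?_⟩
        exact (SimpleGraph.ConnectedComponent.sound hr2.symm)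
      obtain ⟨p, hp⟩ := (hHC _).2 k hmem
      refine ⟨p, dipath_mono (Set.inter_subset_inter_left _ ?_) hp⟩
      exact le_trans (Set.subset_iUnion HC _) Set.subset_union_right
end
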